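/- arXiv:2502.05149 — 4 statements merged into one kernel-verified Lean document; each statement's English description precedes it below -/
import Mathlib

section
/- Let d ≥ 1, ε > 0 and ρ_ε a finite-horizon kernel. A set E ⊆ ℝ^d of finite 𝔓_ε-perimeter is ε-decomposable if and only if there exists a partition {E₁, E₂} of E with |E₁| > 0, |E₂| > 0 and dist^e(E₁, E₂) ≥ ε. -/
open MeasureTheory Metric Set Filter
open scoped ENNReal Topology

noncomputable section

/-- The Gagliardo perimeter of a set `A` with respect to a kernel `ρ`:
`𝔓(A) = 2 ∫_A ∫_{Aᶜ} ρ(x-y)/|x-y| dy dx`. -/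
def gagPer {d : ℕ} (ρ : EuclideanSpace ℝ (Fin d) → ℝ≥0∞)
    (A : Set (EuclideanSpace ℝ (Fin d))) : ℝ≥0∞ :=
  2 * ∫⁻ x in A, ∫⁻ y in Aᶜ, ρ (x - y) / edist x y

/-- The support of the Lebesgue measure restricted to `A`. -/
def measSupp {d : ℕ} (A : Set (EuclideanSpace ℝ (Fin d))) : Set (EuclideanSpace ℝ (Fin d)) :=
  {x | ∀ r : ℝ, 0 < r → 0 < volume (A ∩ ball x r)}

/-- A finite-horizon kernel with horizon `ε`: a measurable function whose essential
support equals the closed ball of radius `ε` centered at the origin. -/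
def IsFiniteHorizonKernel {d : ℕ} (ε : ℝ) (ρ : EuclideanSpace ℝ (Fin d) → ℝ≥0∞) : Prop :=
  Measurable ρ ∧
    measSupp (Function.support ρ) = closedBall (0 : EuclideanSpace ℝ (Fin d)) ε

/-- The essential distance between two sets: the infimum of distances between points in the
supports of the restricted Lebesgue measures. -/
def essDist {d : ℕ} (F₁ F₂ : Set (EuclideanSpace ℝ (Fin d))) : ℝ≥0∞ :=
  ⨅ x ∈ measSupp F₁, ⨅ y ∈ measSupp F₂, edist x y

/-- `ε`-decomposability of a set with respect to the Gagliardo perimeter associated to `ρ`. -/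
def epsDecomposable {d : ℕ} (ρ : EuclideanSpace ℝ (Fin d) → ℝ≥0∞)
    (A : Set (EuclideanSpace ℝ (Fin d))) : Prop :=
  ∃ E₁ E₂ : Set (EuclideanSpace ℝ (Fin d)), MeasurableSet E₁ ∧ MeasurableSet E₂ ∧
    E₁ ∪ E₂ = A ∧ Disjoint E₁ E₂ ∧ 0 < volume E₁ ∧ 0 < volume E₂ ∧
    gagPer ρ E₁ < ⊤ ∧ gagPer ρ E₂ < ⊤ ∧ gagPer ρ A = gagPer ρ E₁ + gagPer ρ E₂

namespace GagAux

variable {d : ℕ}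

lemma null_diff_measSupp (E : Set (EuclideanSpace ℝ (Fin d))) :
    volume (E \ measSupp E) = 0 := by
  set 𝒮 : Set (Set (EuclideanSpace ℝ (Fin d))) := {s | IsOpen s ∧ volume (E ∩ s) = 0} with h𝒮
  obtain ⟨T, hTc, hT𝒮, hTU⟩ := TopologicalSpace.isOpen_sUnion_countable 𝒮 (fun s hs => hs.1)
  have hsub : E \ measSupp E ⊆ E ∩ ⋃₀ 𝒮 := by
    rintro x ⟨hxE, hx⟩
    refine ⟨hxE, ?_⟩
    simp only [measSupp, mem_setOf_eq, not_forall] at hx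
    obtain ⟨r, hr, hr0⟩ := hx
    push_neg at hr0
    exact ⟨ball x r, ⟨isOpen_ball, le_antisymm hr0 (zero_le)⟩, mem_ball_self hr⟩
  refine measure_mono_null hsub ?_
  rw [← hTU, sUnion_eq_biUnion, inter_iUnion₂]
  exact (measure_biUnion_null_iff hTc).2 fun s hs => (hT𝒮 hs).2

lemma ae_restrict_mem_measSupp {E : Set (EuclideanSpace ℝ (Fin d))} (hE : MeasurableSet E) :
    ∀ᵐ x ∂(volume.restrict E), x ∈ measSupp E := by
  have h1 : volume.restrict E (E \ measSupp E) = 0 :=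
    le_antisymm (le_trans (Measure.restrict_le_self _) (null_diff_measSupp E).le) (zero_le)
  filter_upwards [ae_restrict_mem hE, measure_eq_zero_iff_ae_notMem.1 h1] with x hx h2
  exact by_contra fun h => h2 ⟨hx, h⟩

lemma meas_kernel {ρ : EuclideanSpace ℝ (Fin d) → ℝ≥0∞} (hρ : Measurable ρ) :
    Measurable (fun p : EuclideanSpace ℝ (Fin d) × EuclideanSpace ℝ (Fin d) =>
      ρ (p.1 - p.2) / edist p.1 p.2) :=
  (hρ.comp (measurable_fst.sub measurable_snd)).div (measurable_fst.edist measurable_snd)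

lemma meas_inner {ρ : EuclideanSpace ℝ (Fin d) → ℝ≥0∞} (hρ : Measurable ρ)
    (G : Set (EuclideanSpace ℝ (Fin d))) :
    Measurable (fun x => ∫⁻ y in G, ρ (x - y) / edist x y) :=
  (meas_kernel hρ).lintegral_prod_right'

lemma measurableSet_supp {ρ : EuclideanSpace ℝ (Fin d) → ℝ≥0∞} (hρ : Measurable ρ) :
    MeasurableSet (Function.support ρ) := by
  rw [Function.support_eq_preimage]
  exact hρ (measurableSet_singleton 0).compl


variable {ρ : EuclideanSpace ℝ (Fin d) → ℝ≥0∞}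

/-- interaction integral -/
def inter (ρ : EuclideanSpace ℝ (Fin d) → ℝ≥0∞)
    (F G : Set (EuclideanSpace ℝ (Fin d))) : ℝ≥0∞ :=
  ∫⁻ x in F, ∫⁻ y in G, ρ (x - y) / edist x y

lemma gagPer_eq (A : Set (EuclideanSpace ℝ (Fin d))) : gagPer ρ A = 2 * inter ρ A Aᶜ := rfl

lemma inter_union_left {F₁ F₂ : Set (EuclideanSpace ℝ (Fin d))} (h₂ : MeasurableSet F₂)
    (hd : Disjoint F₁ F₂) (G : Set (EuclideanSpace ℝ (Fin d))) :
    inter ρ (F₁ ∪ F₂) G = inter ρ F₁ G + inter ρ F₂ G :=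
  lintegral_union h₂ hd

lemma inter_union_right (hρ : Measurable ρ) (F : Set (EuclideanSpace ℝ (Fin d)))
    {G₁ G₂ : Set (EuclideanSpace ℝ (Fin d))} (h₂ : MeasurableSet G₂) (hd : Disjoint G₁ G₂) :
    inter ρ F (G₁ ∪ G₂) = inter ρ F G₁ + inter ρ F G₂ := by
  unfold inter
  rw [← lintegral_add_left (meas_inner hρ G₁)]
  exact lintegral_congr fun x => lintegral_union h₂ hd

lemma inter_eq_zero_iff (hρ : Measurable ρ) (F G : Set (EuclideanSpace ℝ (Fin d))) :
    inter ρ F G = 0 ↔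
      ∀ᵐ x ∂volume.restrict F, ∀ᵐ y ∂volume.restrict G, ρ (x - y) = 0 := by
  rw [inter, lintegral_eq_zero_iff (meas_inner hρ G)]
  refine eventually_congr (Eventually.of_forall fun x => ?_)
  have hm : Measurable fun y : EuclideanSpace ℝ (Fin d) => ρ (x - y) / edist x y :=
    (hρ.comp (measurable_const.sub measurable_id)).div
      (measurable_const.edist measurable_id)
  rw [Pi.zero_apply, lintegral_eq_zero_iff hm]
  refine eventually_congr (Eventually.of_forall fun y => ?_)
  rw [Pi.zero_apply, ENNReal.div_eq_zero_iff]
  simp [edist_ne_top x y]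

lemma compl_eq_union {E₁ E₂ : Set (EuclideanSpace ℝ (Fin d))} (hd : Disjoint E₁ E₂) :
    E₁ᶜ = (E₁ ∪ E₂)ᶜ ∪ E₂ := by
  rw [compl_union]
  ext x
  by_cases h1 : x ∈ E₁
  · simp [h1, disjoint_left.1 hd h1]
  · by_cases h2 : x ∈ E₂ <;> simp [h1, h2]

lemma gag_split (hρ : Measurable ρ) {E₁ E₂ : Set (EuclideanSpace ℝ (Fin d))}
    (h₁ : MeasurableSet E₁) (h₂ : MeasurableSet E₂) (hd : Disjoint E₁ E₂) :
    gagPer ρ E₁ + gagPer ρ E₂ =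
      gagPer ρ (E₁ ∪ E₂) + 2 * inter ρ E₁ E₂ + 2 * inter ρ E₂ E₁ := by
  have hc1 : E₁ᶜ = (E₁ ∪ E₂)ᶜ ∪ E₂ := compl_eq_union hd
  have hc2 : E₂ᶜ = (E₁ ∪ E₂)ᶜ ∪ E₁ := by rw [union_comm E₁ E₂]; exact compl_eq_union hd.symm
  have hd1 : Disjoint ((E₁ ∪ E₂)ᶜ) E₂ := by
    rw [disjoint_compl_left_iff_subset]; exact subset_union_right
  have hd2 : Disjoint ((E₁ ∪ E₂)ᶜ) E₁ := by
    rw [disjoint_compl_left_iff_subset]; exact subset_union_left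
  rw [gagPer_eq, gagPer_eq, gagPer_eq, hc1, hc2,
    inter_union_right hρ E₁ h₂ hd1, inter_union_right hρ E₂ h₁ hd2,
    inter_union_left h₂ hd ((E₁ ∪ E₂)ᶜ)]
  ring

lemma ae_zero_of_far {ε : ℝ} (hε : 0 < ε) [Nontrivial (EuclideanSpace ℝ (Fin d))]
    (hρ : IsFiniteHorizonKernel ε ρ)
    {F G : Set (EuclideanSpace ℝ (Fin d))} (hF : MeasurableSet F) (hG : MeasurableSet G)
    (H : ∀ x ∈ measSupp F, ∀ y ∈ measSupp G, ε ≤ dist x y) :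
    ∀ᵐ x ∂volume.restrict F, ∀ᵐ y ∂volume.restrict G, ρ (x - y) = 0 := by
  have hN : volume (Function.support ρ \ closedBall (0 : EuclideanSpace ℝ (Fin d)) ε) = 0 := by
    have := null_diff_measSupp (Function.support ρ)
    rwa [hρ.2] at this
  filter_upwards [ae_restrict_mem_measSupp hF] with x hx
  have h1 : volume {y : EuclideanSpace ℝ (Fin d) | dist x y = ε} = 0 := by
    have he : {y : EuclideanSpace ℝ (Fin d) | dist x y = ε} = sphere x ε := by
      ext y; simp only [mem_setOf_eq, mem_sphere, dist_comm]
    rw [he]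
    exact Measure.addHaar_sphere volume x ε
  have h2 : volume ((fun y : EuclideanSpace ℝ (Fin d) => x - y) ⁻¹'
      (Function.support ρ \ closedBall 0 ε)) = 0 := by
    rw [(Measure.measurePreserving_sub_left volume x).measure_preimage
      (((measurableSet_supp hρ.1).diff measurableSet_closedBall).nullMeasurableSet)]
    exact hN
  filter_upwards [ae_restrict_mem_measSupp hG,
    ae_restrict_of_ae (measure_eq_zero_iff_ae_notMem.1 h1),
    ae_restrict_of_ae (measure_eq_zero_iff_ae_notMem.1 h2)] with y hy hy1 hy2
  have hy1' : dist x y ≠ ε := hy1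
  have hlt : ε < dist x y := lt_of_le_of_ne (H x hx y hy) (Ne.symm hy1')
  have hnb : x - y ∉ closedBall (0 : EuclideanSpace ℝ (Fin d)) ε := by
    simp only [mem_closedBall, dist_zero_right, not_le]
    rwa [← dist_eq_norm]
  refine Function.notMem_support.1 fun hs => hy2 ?_
  exact ⟨hs, hnb⟩



lemma indicator_pre {G : Set (EuclideanSpace ℝ (Fin d))} (x z : EuclideanSpace ℝ (Fin d)) :
    G.indicator (1 : EuclideanSpace ℝ (Fin d) → ℝ≥0∞) (x - z) =
      ((fun w => x - w) ⁻¹' G).indicator 1 z := by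
  by_cases h : x - z ∈ G <;> simp [Set.indicator, h]

lemma chain {S F G : Set (EuclideanSpace ℝ (Fin d))} (hS : MeasurableSet S)
    (hF : MeasurableSet F) (hG : MeasurableSet G) :
    ∫⁻ x in F, ∫⁻ y in G, S.indicator (1 : EuclideanSpace ℝ (Fin d) → ℝ≥0∞) (x - y) =
      ∫⁻ z in S, volume ({x | x - z ∈ G} ∩ F) := by
  have step1 : ∀ x : EuclideanSpace ℝ (Fin d),
      ∫⁻ y in G, S.indicator (1 : EuclideanSpace ℝ (Fin d) → ℝ≥0∞) (x - y) =
        ∫⁻ z in S, G.indicator (1 : EuclideanSpace ℝ (Fin d) → ℝ≥0∞) (x - z) := by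
    intro x
    have hmp := Measure.measurePreserving_sub_left (volume : Measure (EuclideanSpace ℝ (Fin d))) x
    have h1 : ∫⁻ y in G, S.indicator (1 : EuclideanSpace ℝ (Fin d) → ℝ≥0∞) (x - y) =
        ∫⁻ z in (fun w => x - w) ⁻¹' G,
          S.indicator (1 : EuclideanSpace ℝ (Fin d) → ℝ≥0∞) (x - (x - z)) := by
      exact (hmp.setLIntegral_comp_preimage hG
        ((measurable_const.indicator hS).comp (measurable_const.sub measurable_id))).symm
    simp only [sub_sub_cancel] at h1
    rw [h1]
    have h2 : ∫⁻ z in (fun w => x - w) ⁻¹' G,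
        S.indicator (1 : EuclideanSpace ℝ (Fin d) → ℝ≥0∞) z =
        volume (S ∩ (fun w => x - w) ⁻¹' G) := by
      rw [lintegral_indicator_one hS, Measure.restrict_apply hS]
    have h3 : ∫⁻ z in S, G.indicator (1 : EuclideanSpace ℝ (Fin d) → ℝ≥0∞) (x - z) =
        volume (S ∩ (fun w => x - w) ⁻¹' G) := by
      have : ∀ z, G.indicator (1 : EuclideanSpace ℝ (Fin d) → ℝ≥0∞) (x - z) =
          ((fun w => x - w) ⁻¹' G).indicator 1 z := fun z => indicator_pre x z
      have hpm : MeasurableSet ((fun w => x - w) ⁻¹' G) := hG.preimage hmp.measurable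
      rw [lintegral_congr this, lintegral_indicator_one hpm, Measure.restrict_apply hpm,
        inter_comm]
    rw [h2, h3]
  rw [lintegral_congr step1]
  rw [lintegral_lintegral_swap]
  · refine lintegral_congr fun z => ?_
    have : ∀ x, G.indicator (1 : EuclideanSpace ℝ (Fin d) → ℝ≥0∞) (x - z) =
        ({x | x - z ∈ G} : Set (EuclideanSpace ℝ (Fin d))).indicator 1 x := by
      intro x; by_cases h : x - z ∈ G <;> simp [Set.indicator, h]
    have hpm : MeasurableSet {x : EuclideanSpace ℝ (Fin d) | x - z ∈ G} :=
      hG.preimage (measurePreserving_sub_right volume z).measurable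
    rw [lintegral_congr this, lintegral_indicator_one hpm, Measure.restrict_apply hpm]
  · exact ((measurable_const.indicator hG).comp
      (measurable_fst.sub measurable_snd)).aemeasurable


lemma exists_density_point {F : Set (EuclideanSpace ℝ (Fin d))} (hF : MeasurableSet F)
    {x₀ : EuclideanSpace ℝ (Fin d)} (hx₀ : x₀ ∈ measSupp F) {δ : ℝ} (hδ : 0 < δ) :
    ∃ x₁ ∈ F ∩ ball x₀ δ, Tendsto
      (fun r => volume (F ∩ closedBall x₁ r) / volume (closedBall x₁ r)) (𝓝[>] 0) (𝓝 1) := by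
  have hb := Besicovitch.ae_tendsto_measure_inter_div_of_measurableSet
    (volume : Measure (EuclideanSpace ℝ (Fin d))) hF
  have hpos : volume (F ∩ ball x₀ δ) ≠ 0 := (hx₀ δ hδ).ne'
  obtain ⟨x₁, hx₁, ht⟩ := Measure.exists_mem_of_measure_ne_zero_of_ae hpos (ae_restrict_of_ae hb)
  refine ⟨x₁, hx₁, ?_⟩
  have h1 : F.indicator (1 : EuclideanSpace ℝ (Fin d) → ℝ≥0∞) x₁ = 1 :=
    indicator_of_mem hx₁.1 _
  rwa [h1] at ht

lemma not_ae_zero_of_close {ε : ℝ} (hε : 0 < ε) [Nontrivial (EuclideanSpace ℝ (Fin d))]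
    (hρ : IsFiniteHorizonKernel ε ρ)
    {F G : Set (EuclideanSpace ℝ (Fin d))} (hF : MeasurableSet F) (hG : MeasurableSet G)
    {x₀ y₀ : EuclideanSpace ℝ (Fin d)} (hx₀ : x₀ ∈ measSupp F) (hy₀ : y₀ ∈ measSupp G)
    (hxy : dist x₀ y₀ < ε)
    (hae : ∀ᵐ x ∂volume.restrict F, ∀ᵐ y ∂volume.restrict G, ρ (x - y) = 0) : False := by
  have hS : MeasurableSet (Function.support ρ) := measurableSet_supp hρ.1
  set S := Function.support ρ with hSdef
  -- the interaction integral of the indicator vanishes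
  have hT0 : ∫⁻ x in F, ∫⁻ y in G,
      S.indicator (1 : EuclideanSpace ℝ (Fin d) → ℝ≥0∞) (x - y) = 0 := by
    have h : ∀ᵐ x ∂volume.restrict F,
        (∫⁻ y in G, S.indicator (1 : EuclideanSpace ℝ (Fin d) → ℝ≥0∞) (x - y)) = 0 := by
      filter_upwards [hae] with x hx
      have h2 : ∀ᵐ y ∂volume.restrict G,
          S.indicator (1 : EuclideanSpace ℝ (Fin d) → ℝ≥0∞) (x - y) = 0 := by
        filter_upwards [hx] with y hy
        exact indicator_of_notMem (Function.notMem_support.2 hy) _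
      rw [lintegral_congr_ae h2, lintegral_zero]
    rw [lintegral_congr_ae h, lintegral_zero]
  -- density points
  have hδ : 0 < (ε - dist x₀ y₀) / 3 := by linarith
  set δ := (ε - dist x₀ y₀) / 3 with hδdef
  obtain ⟨x₁, hx₁, htx⟩ := exists_density_point hF hx₀ hδ
  obtain ⟨y₁, hy₁, hty⟩ := exists_density_point hG hy₀ hδ
  set z₀ := x₁ - y₁ with hz₀def
  have hz₀ : ‖z₀‖ < ε - δ := by
    have h1 : dist x₁ x₀ < δ := mem_ball.1 hx₁.2
    have h2 : dist y₁ y₀ < δ := mem_ball.1 hy₁.2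
    have h3 : dist x₁ y₁ ≤ dist x₁ x₀ + dist x₀ y₀ + dist y₀ y₁ := dist_triangle4 _ _ _ _
    rw [hz₀def, ← dist_eq_norm]
    rw [dist_comm y₀ y₁] at h3
    have : δ + δ + δ = ε - dist x₀ y₀ := by rw [hδdef]; ring
    linarith
  -- the constant η
  set η : ℝ≥0∞ := (2 : ℝ≥0∞)⁻¹ ^ (d + 3) with hηdef
  have hη0 : η ≠ 0 := pow_ne_zero _ (by simp)
  have hinvle : (2 : ℝ≥0∞)⁻¹ ≤ 1 := ENNReal.inv_le_one.2 one_le_two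
  have hη2 : η ≤ 2⁻¹ := by
    calc η = (2:ℝ≥0∞)⁻¹ ^ (d + 2) * 2⁻¹ := by rw [hηdef, pow_succ]
    _ ≤ 1 * 2⁻¹ := by gcongr; exact pow_le_one' hinvle _
    _ = 2⁻¹ := one_mul _
  have hη1 : η ≤ 1 := le_trans hη2 hinvle
  have h1η : (1 : ℝ≥0∞) - η < 1 := ENNReal.sub_lt_self ENNReal.one_ne_top one_ne_zero hη0
  -- choose a good radius r
  have hev1 : ∀ᶠ r in 𝓝[>] (0:ℝ),
      1 - η < volume (F ∩ closedBall x₁ r) / volume (closedBall x₁ r) :=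
    htx.eventually (eventually_gt_nhds h1η)
  have hhalf : Tendsto (fun r : ℝ => r / 2) (𝓝[>] 0) (𝓝[>] 0) := by
    apply tendsto_nhdsWithin_of_tendsto_nhds_of_eventually_within
    · have : Tendsto (fun r : ℝ => r / 2) (𝓝 0) (𝓝 (0 / 2)) :=
        (continuous_id.div_const 2).tendsto 0
      simpa using this.mono_left nhdsWithin_le_nhds
    · filter_upwards [eventually_mem_nhdsWithin] with r (hr : r ∈ Ioi (0:ℝ))
      exact mem_Ioi.2 (half_pos hr)
  have hev2 : ∀ᶠ r in 𝓝[>] (0:ℝ),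
      1 - η < volume (G ∩ closedBall y₁ (r/2)) / volume (closedBall y₁ (r/2)) :=
    (hty.comp hhalf).eventually (eventually_gt_nhds h1η)
  have hevδ : ∀ᶠ r in 𝓝[>] (0:ℝ), r < δ :=
    (eventually_lt_nhds hδ).filter_mono nhdsWithin_le_nhds
  have hevp : ∀ᶠ r in 𝓝[>] (0:ℝ), 0 < r := eventually_mem_nhdsWithin
  obtain ⟨r, hr1, hr2, hrδ, hr0⟩ := (hev1.and (hev2.and (hevδ.and hevp))).exists
  set V := volume (closedBall x₁ r) with hVdef
  set V' := volume (closedBall y₁ (r/2)) with hV'def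
  have hr20 : (0:ℝ) < r / 2 := by positivity
  have hV0 : V ≠ 0 := (measure_closedBall_pos volume x₁ hr0).ne'
  have hVt : V ≠ ⊤ := measure_closedBall_lt_top.ne
  have hV'0 : V' ≠ 0 := (measure_closedBall_pos volume y₁ hr20).ne'
  have hVV' : V = (2:ℝ≥0∞) ^ d * V' := by
    rw [hVdef, hV'def, Measure.addHaar_closedBall volume x₁ hr0.le,
      Measure.addHaar_closedBall volume y₁ hr20.le, finrank_euclideanSpace_fin]
    have hrd : r ^ d = 2 ^ d * (r / 2) ^ d := by
      rw [div_pow]; field_simp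
    rw [hrd, ENNReal.ofReal_mul (by positivity),
      ENNReal.ofReal_pow (by norm_num : (0:ℝ) ≤ 2), ENNReal.ofReal_ofNat, mul_assoc]
  have hF1 : (1 - η) * V ≤ volume (F ∩ closedBall x₁ r) :=
    ((ENNReal.lt_div_iff_mul_lt (Or.inl hV0) (Or.inl hVt)).1 hr1).le
  have hG1 : (1 - η) * V' ≤ volume (G ∩ closedBall y₁ (r/2)) :=
    ((ENNReal.lt_div_iff_mul_lt (Or.inl hV'0)
      (Or.inl measure_closedBall_lt_top.ne)).1 hr2).le
  set D := volume (closedBall x₁ r \ F) with hDdef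
  have hDt : D ≠ ⊤ := ((measure_mono diff_subset).trans_lt hVt.lt_top).ne
  have h1ηVt : (1 - η) * V ≠ ⊤ := ENNReal.mul_ne_top
    (ne_top_of_le_ne_top ENNReal.one_ne_top tsub_le_self) hVt
  have hDle : D ≤ η * V := by
    have hsum : D + volume (closedBall x₁ r ∩ F) = V := measure_diff_add_inter _ hF
    have hsplit : η * V + (1 - η) * V = V := by
      rw [← add_mul, add_tsub_cancel_of_le hη1, one_mul]
    have h1 : D + (1 - η) * V ≤ η * V + (1 - η) * V := by
      calc D + (1 - η) * V ≤ D + volume (closedBall x₁ r ∩ F) := by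
            gcongr
            rw [inter_comm]
            exact hF1
      _ = V := hsum
      _ = η * V + (1 - η) * V := hsplit.symm
    exact (ENNReal.add_le_add_iff_right h1ηVt).1 h1
  have harith : η * V' + D ≤ (1 - η) * V' := by
    have h2 : η * V' ≤ η * ((2:ℝ≥0∞) ^ d * V') := by
      gcongr
      exact le_mul_of_one_le_left (zero_le) (one_le_pow_of_one_le' one_le_two d)
    have h5 : (2:ℝ≥0∞) * η * 2 ^ d ≤ 2⁻¹ := by
      have he : (2:ℝ≥0∞) * η * 2 ^ d =
          ((2:ℝ≥0∞) * 2⁻¹) ^ (d + 1) * (2⁻¹) ^ 2 := by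
        rw [hηdef, mul_pow]; ring
      rw [he, ENNReal.mul_inv_cancel two_ne_zero ENNReal.ofNat_ne_top, one_pow, one_mul, sq]
      exact mul_le_of_le_one_right' hinvle
    have h6 : (2:ℝ≥0∞)⁻¹ ≤ 1 - η := by
      refine ENNReal.le_sub_of_add_le_left (ne_top_of_le_ne_top ENNReal.one_ne_top hη1) ?_
      calc η + 2⁻¹ ≤ 2⁻¹ + 2⁻¹ := add_le_add_left hη2 _
      _ = 1 := ENNReal.inv_two_add_inv_two
    have hDle' : D ≤ η * ((2:ℝ≥0∞)^d * V') := by rw [← hVV']; exact hDle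
    calc η * V' + D ≤ η * ((2:ℝ≥0∞)^d * V') + η * ((2:ℝ≥0∞)^d * V') := add_le_add h2 hDle'
    _ = 2 * (η * ((2:ℝ≥0∞)^d * V')) := (two_mul _).symm
    _ = ((2:ℝ≥0∞) * η * 2^d) * V' := by ring
    _ ≤ 2⁻¹ * V' := mul_le_mul_left h5 V'
    _ ≤ (1 - η) * V' := mul_le_mul_left h6 V'
  -- pointwise lower bound near z₀
  have hkey : ∀ z : EuclideanSpace ℝ (Fin d), dist z z₀ < r / 2 →
      η * V' ≤ volume ({x | x - z ∈ G} ∩ F) := by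
    intro z hz
    set P := (fun x : EuclideanSpace ℝ (Fin d) => x - z) ⁻¹' (G ∩ closedBall y₁ (r/2))
      with hPdef
    have hPsub : P ⊆ closedBall x₁ r := by
      intro x hx
      simp only [hPdef, mem_preimage, mem_inter_iff, mem_closedBall] at hx
      have e1 : dist x (z + y₁) = dist (x - z) y₁ := by
        rw [dist_eq_norm, dist_eq_norm]; congr 1; abel
      have e2 : dist (z + y₁) x₁ = dist z z₀ := by
        rw [dist_eq_norm, dist_eq_norm, hz₀def]; congr 1; abel
      rw [mem_closedBall]
      calc dist x x₁ ≤ dist x (z + y₁) + dist (z + y₁) x₁ := dist_triangle _ _ _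
      _ = dist (x - z) y₁ + dist z z₀ := by rw [e1, e2]
      _ ≤ r/2 + r/2 := add_le_add hx.2 hz.le
      _ = r := by ring
    have hPvol : volume P = volume (G ∩ closedBall y₁ (r/2)) :=
      (measurePreserving_sub_right volume z).measure_preimage
        ((hG.inter measurableSet_closedBall).nullMeasurableSet)
    have hcover : P ⊆ ({x | x - z ∈ G} ∩ F) ∪ (closedBall x₁ r \ F) := by
      intro x hx
      by_cases hxF : x ∈ F
      · exact Or.inl ⟨(mem_preimage.1 hx).1, hxF⟩
      · exact Or.inr ⟨hPsub hx, hxF⟩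
    have h1 : (1 - η) * V' ≤ volume ({x | x - z ∈ G} ∩ F) + D := by
      calc (1 - η) * V' ≤ volume (G ∩ closedBall y₁ (r/2)) := hG1
      _ = volume P := hPvol.symm
      _ ≤ volume (({x | x - z ∈ G} ∩ F) ∪ (closedBall x₁ r \ F)) := measure_mono hcover
      _ ≤ _ := measure_union_le _ _
    exact (ENNReal.add_le_add_iff_right hDt).1 (le_trans harith h1)
  -- conclude
  have hz₀mem : z₀ ∈ measSupp S := by
    rw [hρ.2]
    simp only [mem_closedBall, dist_zero_right]
    linarith [hz₀]
  have hSball : (0:ℝ≥0∞) < volume (S ∩ ball z₀ (r/2)) := hz₀mem (r/2) hr20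
  have hTpos : 0 < ∫⁻ x in F, ∫⁻ y in G,
      S.indicator (1 : EuclideanSpace ℝ (Fin d) → ℝ≥0∞) (x - y) := by
    rw [chain hS hF hG]
    calc (0:ℝ≥0∞) < (η * V') * volume (S ∩ ball z₀ (r/2)) :=
      ENNReal.mul_pos (mul_ne_zero hη0 hV'0) hSball.ne'
    _ = ∫⁻ _ in S ∩ ball z₀ (r/2), η * V' := (setLIntegral_const _ _).symm
    _ ≤ ∫⁻ z in S ∩ ball z₀ (r/2), volume ({x | x - z ∈ G} ∩ F) :=
        setLIntegral_mono' (hS.inter measurableSet_ball)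
          (fun z hz => hkey z (mem_ball.1 hz.2))
    _ ≤ ∫⁻ z in S, volume ({x | x - z ∈ G} ∩ F) := lintegral_mono_set inter_subset_left
  exact absurd hT0 hTpos.ne'

end GagAux

/-- A set of finite `𝔓_ε`-perimeter is `ε`-decomposable iff it admits a partition into two
sets of positive measure whose essential distance is at least `ε`. -/
theorem statement0 (d : ℕ) (hd : 1 ≤ d) (ε : ℝ) (hε : 0 < ε)
    (ρ : EuclideanSpace ℝ (Fin d) → ℝ≥0∞) (hρ : IsFiniteHorizonKernel ε ρ)
    (A : Set (EuclideanSpace ℝ (Fin d))) (hA : MeasurableSet A)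
    (hfin : gagPer ρ A < ⊤) :
    epsDecomposable ρ A ↔
      ∃ E₁ E₂ : Set (EuclideanSpace ℝ (Fin d)), MeasurableSet E₁ ∧ MeasurableSet E₂ ∧
        E₁ ∪ E₂ = A ∧ Disjoint E₁ E₂ ∧ 0 < volume E₁ ∧ 0 < volume E₂ ∧
        ENNReal.ofReal ε ≤ essDist E₁ E₂ := by
  have hmeas := hρ.1
  haveI : NeZero d := ⟨by omega⟩
  haveI : Nontrivial (EuclideanSpace ℝ (Fin d)) := inferInstance
  constructor
  · rintro ⟨E₁, E₂, h₁, h₂, hu, hdisj, hv₁, hv₂, hf₁, hf₂, hsum⟩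
    subst hu
    have hid := GagAux.gag_split hmeas h₁ h₂ hdisj
    have hzero : 2 * GagAux.inter ρ E₁ E₂ + 2 * GagAux.inter ρ E₂ E₁ = 0 := by
      have h : gagPer ρ (E₁ ∪ E₂) +
          (2 * GagAux.inter ρ E₁ E₂ + 2 * GagAux.inter ρ E₂ E₁) =
          gagPer ρ (E₁ ∪ E₂) + 0 := by
        calc gagPer ρ (E₁ ∪ E₂) +
            (2 * GagAux.inter ρ E₁ E₂ + 2 * GagAux.inter ρ E₂ E₁)
            = gagPer ρ E₁ + gagPer ρ E₂ := by rw [← add_assoc]; exact hid.symm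
        _ = gagPer ρ (E₁ ∪ E₂) + 0 := by rw [add_zero]; exact hsum.symm
      exact (ENNReal.add_right_inj hfin.ne).1 h
    have hI₁₂ : GagAux.inter ρ E₁ E₂ = 0 := by
      have h2 := (add_eq_zero.1 hzero).1
      simpa using h2
    refine ⟨E₁, E₂, h₁, h₂, rfl, hdisj, hv₁, hv₂, ?_⟩
    refine le_iInf₂ fun x hx => le_iInf₂ fun y hy => ?_
    rw [edist_dist]
    refine ENNReal.ofReal_le_ofReal ?_
    by_contra hlt
    push_neg at hlt
    exact GagAux.not_ae_zero_of_close hε hρ h₁ h₂ hx hy hlt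
      ((GagAux.inter_eq_zero_iff hmeas E₁ E₂).1 hI₁₂)
  · rintro ⟨E₁, E₂, h₁, h₂, hu, hdisj, hv₁, hv₂, hdist⟩
    subst hu
    have H : ∀ x ∈ measSupp E₁, ∀ y ∈ measSupp E₂, ε ≤ dist x y := by
      intro x hx y hy
      have h1 : ENNReal.ofReal ε ≤ edist x y :=
        le_trans hdist (le_trans (iInf₂_le x hx) (iInf₂_le y hy))
      rw [edist_dist] at h1
      exact (ENNReal.ofReal_le_ofReal_iff dist_nonneg).1 h1
    have H' : ∀ x ∈ measSupp E₂, ∀ y ∈ measSupp E₁, ε ≤ dist x y := by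
      intro x hx y hy
      rw [dist_comm]
      exact H y hy x hx
    have hI₁₂ : GagAux.inter ρ E₁ E₂ = 0 :=
      (GagAux.inter_eq_zero_iff hmeas _ _).2 (GagAux.ae_zero_of_far hε hρ h₁ h₂ H)
    have hI₂₁ : GagAux.inter ρ E₂ E₁ = 0 :=
      (GagAux.inter_eq_zero_iff hmeas _ _).2 (GagAux.ae_zero_of_far hε hρ h₂ h₁ H')
    have hid := GagAux.gag_split hmeas h₁ h₂ hdisj
    rw [hI₁₂, hI₂₁, mul_zero, add_zero, add_zero] at hid
    refine ⟨E₁, E₂, h₁, h₂, rfl, hdisj, hv₁, hv₂, ?_, ?_, hid.symm⟩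
    · exact lt_of_le_of_lt (le_trans le_self_add hid.le) hfin
    · exact lt_of_le_of_lt (le_trans le_add_self hid.le) hfin

end
end

section
/- Let ε > 0, ρ_ε a finite-horizon kernel, E ⊆ ℝ^d a set of finite 𝔓_ε-perimeter, and x, y ∈ E^(1). Then: (i) B_ε(x) ∩ E^(1) ⊆ E^x; (ii) either E^x = E^y or dist(E^x, E^y) ≥ ε; (iii) 𝔓_ε(E^x) ≤ 𝔓_ε(E) < ∞ and E^x is ε-indecomposable. -/
open MeasureTheory Metric Set Filter
open scoped ENNReal Topology

noncomputable section

/-- The set of points of Lebesgue density one of `A`. -/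
def densityOne {d : ℕ} (A : Set (EuclideanSpace ℝ (Fin d))) : Set (EuclideanSpace ℝ (Fin d)) :=
  {x | Tendsto (fun r : ℝ => volume (A ∩ ball x r) / volume (ball x r)) (𝓝[>] 0) (𝓝 1)}

/-- Two points of `densityOne A` are `ε`-connected in `A` if they can be joined by a finite
chain of points of `densityOne A` with consecutive distances `< ε`. -/
def epsConnected {d : ℕ} (ε : ℝ) (A : Set (EuclideanSpace ℝ (Fin d)))
    (x y : EuclideanSpace ℝ (Fin d)) : Prop :=
  ∃ N : ℕ, ∃ z : ℕ → EuclideanSpace ℝ (Fin d), z 0 = x ∧ z N = y ∧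
    (∀ i ≤ N, z i ∈ densityOne A) ∧ ∀ i < N, dist (z i) (z (i + 1)) < ε

/-- The `ε`-connected component of `A` containing `x`. -/
def epsComponent {d : ℕ} (ε : ℝ) (A : Set (EuclideanSpace ℝ (Fin d)))
    (x : EuclideanSpace ℝ (Fin d)) : Set (EuclideanSpace ℝ (Fin d)) :=
  {y ∈ densityOne A | epsConnected ε A x y}

/-- The (extended) distance between two sets. -/
def setEDist {d : ℕ} (S T : Set (EuclideanSpace ℝ (Fin d))) : ℝ≥0∞ :=
  ⨅ x ∈ S, ⨅ y ∈ T, edist x y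


namespace Aux


variable {d : ℕ}

lemma vol_sphere_zero (x : EuclideanSpace ℝ (Fin d)) {r : ℝ} (hr : 0 < r) :
    volume (sphere x r) = 0 := by
  rcases subsingleton_or_nontrivial (EuclideanSpace ℝ (Fin d)) with h | h
  · have he : sphere x r = ∅ := by
      ext y
      simp only [mem_sphere, mem_empty_iff_false, iff_false]
      have : y = x := Subsingleton.elim _ _
      simp only [this, dist_self]
      exact fun h0 => hr.ne h0
    simp [he]
  · exact Measure.addHaar_sphere volume x r

lemma measure_union_null_right' {s t : Set (EuclideanSpace ℝ (Fin d))}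
    (h : volume t = 0) : volume (s ∪ t) = volume s :=
  le_antisymm ((measure_union_le _ _).trans (by rw [h, add_zero]))
    (measure_mono subset_union_left)

lemma vol_inter_closedBall_eq (s : Set (EuclideanSpace ℝ (Fin d)))
    (x : EuclideanSpace ℝ (Fin d)) {r : ℝ} (hr : 0 < r) :
    volume (s ∩ closedBall x r) = volume (s ∩ ball x r) := by
  rw [← ball_union_sphere, inter_union_distrib_left]
  exact measure_union_null_right' (measure_mono_null inter_subset_right (vol_sphere_zero x hr))

lemma vol_closedBall_eq (x : EuclideanSpace ℝ (Fin d)) {r : ℝ} (hr : 0 < r) :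
    volume (closedBall x r) = volume (ball x r) := by
  rw [← ball_union_sphere]
  exact measure_union_null_right' (vol_sphere_zero x hr)

lemma densityOne_ae_eq {A : Set (EuclideanSpace ℝ (Fin d))} (hA : MeasurableSet A) :
    densityOne A =ᵐ[volume] A := by
  have h := Besicovitch.ae_tendsto_measure_inter_div_of_measurableSet volume hA
  have h' : ∀ᵐ x ∂(volume : Measure (EuclideanSpace ℝ (Fin d))),
      Tendsto (fun r : ℝ => volume (A ∩ ball x r) / volume (ball x r)) (𝓝[>] 0)
        (𝓝 (A.indicator 1 x)) := by
    filter_upwards [h] with x hx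
    apply hx.congr'
    filter_upwards [self_mem_nhdsWithin] with r hr
    rw [vol_inter_closedBall_eq A x hr, vol_closedBall_eq x hr]
  rw [Filter.eventuallyEq_set]
  filter_upwards [h'] with x hx
  constructor
  · intro hd
    by_contra hxA
    have h0 : A.indicator (1 : EuclideanSpace ℝ (Fin d) → ℝ≥0∞) x = 0 := by
      simp [hxA]
    rw [h0] at hx
    have := tendsto_nhds_unique hd hx
    simp at this
  · intro hxA
    have h1 : A.indicator (1 : EuclideanSpace ℝ (Fin d) → ℝ≥0∞) x = 1 := by
      simp [hxA]
    rwa [h1] at hx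

lemma vol_inter_ball_pos {A : Set (EuclideanSpace ℝ (Fin d))} {x : EuclideanSpace ℝ (Fin d)}
    (hx : x ∈ densityOne A) {r : ℝ} (hr : 0 < r) : 0 < volume (A ∩ ball x r) := by
  have h : Tendsto (fun s : ℝ => volume (A ∩ ball x s) / volume (ball x s)) (𝓝[>] 0) (𝓝 1) := hx
  have h1 : ∀ᶠ s in 𝓝[>] (0 : ℝ),
      volume (A ∩ ball x s) / volume (ball x s) ≠ 0 :=
    h.eventually_ne (by norm_num)
  obtain ⟨s, hs1, hs2⟩ := (h1.and (Ioo_mem_nhdsGT_of_mem ⟨le_refl 0, hr⟩)).exists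
  have hne : volume (A ∩ ball x s) ≠ 0 := by
    intro h0
    exact hs1 (by simp [h0, ENNReal.zero_div])
  have : 0 < volume (A ∩ ball x s) := pos_iff_ne_zero.mpr hne
  exact this.trans_le (measure_mono (inter_subset_inter_right _ (ball_subset_ball hs2.2.le)))

lemma densityOne_subset_measSupp {A : Set (EuclideanSpace ℝ (Fin d))} :
    densityOne A ⊆ measSupp A :=
  fun _ hx r hr => vol_inter_ball_pos hx hr

lemma measSupp_union (S T : Set (EuclideanSpace ℝ (Fin d))) :
    measSupp (S ∪ T) ⊆ measSupp S ∪ measSupp T := by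
  intro z hz
  by_contra h
  rw [mem_union, not_or] at h
  obtain ⟨h1, h2⟩ := h
  simp only [measSupp, mem_setOf_eq, not_forall, not_lt, nonpos_iff_eq_zero] at h1 h2
  obtain ⟨r1, hr1, hv1⟩ := h1
  obtain ⟨r2, hr2, hv2⟩ := h2
  have := hz (min r1 r2) (lt_min hr1 hr2)
  have hle : volume ((S ∪ T) ∩ ball z (min r1 r2)) ≤
      volume (S ∩ ball z r1) + volume (T ∩ ball z r2) := by
    refine le_trans (measure_mono ?_) (measure_union_le _ _)
    rintro w ⟨hw | hw, hb⟩
    · exact Or.inl ⟨hw, ball_subset_ball (min_le_left _ _) hb⟩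
    · exact Or.inr ⟨hw, ball_subset_ball (min_le_right _ _) hb⟩
  rw [hv1, hv2, add_zero] at hle
  exact absurd (le_antisymm hle zero_le) this.ne'

variable {ε : ℝ} {A : Set (EuclideanSpace ℝ (Fin d))}

lemma epsConnected_refl {x : EuclideanSpace ℝ (Fin d)} (hx : x ∈ densityOne A) :
    epsConnected ε A x x :=
  ⟨0, fun _ => x, rfl, rfl, fun _ _ => hx, fun i hi => absurd hi (Nat.not_lt_zero i)⟩

lemma epsConnected_symm {x y : EuclideanSpace ℝ (Fin d)} (h : epsConnected ε A x y) :
    epsConnected ε A y x := by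
  obtain ⟨N, z, h0, hN, hmem, hstep⟩ := h
  refine ⟨N, fun i => z (N - i), by simp [hN], by simp [h0], fun i _ => hmem _ (Nat.sub_le _ _), ?_⟩
  intro i hi
  simp only []
  have h1 : N - i = (N - (i + 1)) + 1 := by omega
  rw [h1, dist_comm]
  exact hstep _ (by omega)

lemma epsConnected_trans {x y w : EuclideanSpace ℝ (Fin d)}
    (h1 : epsConnected ε A x y) (h2 : epsConnected ε A y w) : epsConnected ε A x w := by
  obtain ⟨N, z, hz0, hzN, hzmem, hzstep⟩ := h1
  obtain ⟨M, u, hu0, huM, humem, hustep⟩ := h2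
  refine ⟨N + M, fun i => if i ≤ N then z i else u (i - N), by simp [hz0], ?_, ?_, ?_⟩
  · by_cases h : M = 0
    · subst h
      simp only [add_zero, le_refl, if_pos]
      rw [hzN, ← hu0, huM]
    · have hnn : ¬ (N + M ≤ N) := by omega
      simp only [hnn, if_neg, if_false]
      rw [show N + M - N = M from by omega, huM]
  · intro i hi
    by_cases h : i ≤ N
    · simpa [h] using hzmem i h
    · simpa [h] using humem (i - N) (by omega)
  · intro i hi
    rcases lt_trichotomy i N with h | h | h
    · have ha : i ≤ N := h.le
      have hb : i + 1 ≤ N := h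
      simpa [ha, hb] using hzstep i h
    · have hM : 0 < M := by omega
      have ha : i ≤ N := h.le
      have hb : ¬ (i + 1 ≤ N) := by omega
      simp only [ha, if_pos, hb, if_neg, if_false]
      rw [show i + 1 - N = 1 from by omega, h, hzN, ← hu0]
      exact hustep 0 hM
    · have ha : ¬ i ≤ N := by omega
      have hb : ¬ i + 1 ≤ N := by omega
      simp only [ha, hb, if_neg, if_false]
      rw [show i + 1 - N = (i - N) + 1 from by omega]
      exact hustep (i - N) (by omega)

lemma epsComponent_subset_densityOne {x : EuclideanSpace ℝ (Fin d)} :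
    epsComponent ε A x ⊆ densityOne A := fun _ h => h.1

lemma epsComponent_eq_of_mem {x x' : EuclideanSpace ℝ (Fin d)}
    (h : x' ∈ epsComponent ε A x) : epsComponent ε A x' = epsComponent ε A x := by
  ext y
  constructor
  · rintro ⟨hy, hc⟩
    exact ⟨hy, epsConnected_trans h.2 hc⟩
  · rintro ⟨hy, hc⟩
    exact ⟨hy, epsConnected_trans (epsConnected_symm h.2) hc⟩

lemma mem_epsComponent_self {x : EuclideanSpace ℝ (Fin d)} (hx : x ∈ densityOne A) :
    x ∈ epsComponent ε A x := ⟨hx, epsConnected_refl hx⟩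

lemma ball_inter_densityOne_subset (hε : 0 < ε) {x : EuclideanSpace ℝ (Fin d)}
    (hx : x ∈ densityOne A) :
    ball x ε ∩ densityOne A ⊆ epsComponent ε A x := by
  rintro y ⟨hyb, hyd⟩
  refine ⟨hyd, 1, fun i => if i = 0 then x else y, by simp, by simp, ?_, ?_⟩
  · intro i _
    by_cases h : i = 0 <;> simp [h, hx, hyd]
  · intro i hi
    have : i = 0 := by omega
    subst this
    simp only [if_pos rfl, if_neg one_ne_zero]
    rw [dist_comm]
    exact mem_ball.mp hyb
variable {ρ : EuclideanSpace ℝ (Fin d) → ℝ≥0∞}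

/-- interaction integral -/
def interJ (ρ : EuclideanSpace ℝ (Fin d) → ℝ≥0∞) (S T : Set (EuclideanSpace ℝ (Fin d))) : ℝ≥0∞ :=
  ∫⁻ a in S, ∫⁻ b in T, ρ (a - b) / edist a b

lemma gagPer_eq_interJ (S : Set (EuclideanSpace ℝ (Fin d))) :
    gagPer ρ S = 2 * interJ ρ S Sᶜ := rfl

lemma interJ_mono {S S' T T' : Set (EuclideanSpace ℝ (Fin d))} (hS : S ⊆ S') (hT : T ⊆ T') :
    interJ ρ S T ≤ interJ ρ S' T' := by
  refine lintegral_mono' (Measure.restrict_mono hS le_rfl) fun a => ?_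
  exact lintegral_mono' (Measure.restrict_mono hT le_rfl) fun b => le_rfl

lemma gagPer_congr {S T : Set (EuclideanSpace ℝ (Fin d))} (h : S =ᵐ[volume] T) :
    gagPer ρ S = gagPer ρ T := by
  unfold gagPer
  rw [Measure.restrict_congr_set h]
  congr 1
  refine lintegral_congr fun a => ?_
  rw [Measure.restrict_congr_set h.compl]

lemma measurable_inner_interJ (hρm : Measurable ρ) (T : Set (EuclideanSpace ℝ (Fin d))) :
    Measurable fun a => ∫⁻ b in T, ρ (a - b) / edist a b := by
  apply Measurable.lintegral_prod_right
  exact (hρm.comp (measurable_fst.sub measurable_snd)).div measurable_edist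

lemma interJ_union_right (hρm : Measurable ρ) {S T₁ T₂ : Set (EuclideanSpace ℝ (Fin d))}
    (hT₂ : MeasurableSet T₂) (hd : Disjoint T₁ T₂) :
    interJ ρ S (T₁ ∪ T₂) = interJ ρ S T₁ + interJ ρ S T₂ := by
  unfold interJ
  rw [← lintegral_add_left (measurable_inner_interJ hρm T₁)]
  exact lintegral_congr fun a => lintegral_union hT₂ hd

lemma interJ_union_left {S₁ S₂ T : Set (EuclideanSpace ℝ (Fin d))}
    (hS₂ : MeasurableSet S₂) (hd : Disjoint S₁ S₂) :
    interJ ρ (S₁ ∪ S₂) T = interJ ρ S₁ T + interJ ρ S₂ T :=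
  lintegral_union hS₂ hd

/-- decomposition identity -/
lemma gagPer_union_eq (hρm : Measurable ρ) {E₁ E₂ : Set (EuclideanSpace ℝ (Fin d))}
    (h1 : MeasurableSet E₁) (h2 : MeasurableSet E₂) (hd : Disjoint E₁ E₂) :
    gagPer ρ E₁ + gagPer ρ E₂ =
      gagPer ρ (E₁ ∪ E₂) + 2 * interJ ρ E₁ E₂ + 2 * interJ ρ E₂ E₁ := by
  have hc1 : E₁ᶜ = (E₁ ∪ E₂)ᶜ ∪ E₂ := by
    ext a
    by_cases ha : a ∈ E₂
    · have : a ∉ E₁ := fun h => (disjoint_left.mp hd h) ha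
      simp [ha, this]
    · simp [ha]
  have hc2 : E₂ᶜ = (E₁ ∪ E₂)ᶜ ∪ E₁ := by
    ext a
    by_cases ha : a ∈ E₁
    · have : a ∉ E₂ := fun h => (disjoint_left.mp hd ha) h
      simp [ha, this]
    · simp [ha]
  have hd1 : Disjoint ((E₁ ∪ E₂)ᶜ) E₂ := by
    rw [disjoint_compl_left_iff_subset]
    exact subset_union_right
  have hd2 : Disjoint ((E₁ ∪ E₂)ᶜ) E₁ := by
    rw [disjoint_compl_left_iff_subset]
    exact subset_union_left
  rw [gagPer_eq_interJ, gagPer_eq_interJ, gagPer_eq_interJ, hc1, hc2,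
    interJ_union_right hρm h2 hd1, interJ_union_right hρm h1 hd2,
    interJ_union_left h2 hd]
  ring

/-- the kernel vanishes a.e. outside the open ball of radius ε -/
lemma kernel_null (hρ : IsFiniteHorizonKernel ε ρ) (hε : 0 < ε) :
    volume {w : EuclideanSpace ℝ (Fin d) | w ∉ ball (0 : EuclideanSpace ℝ (Fin d)) ε ∧ ρ w ≠ 0}
      = 0 := by
  have key : volume (Function.support ρ \ closedBall (0 : EuclideanSpace ℝ (Fin d)) ε) = 0 := by
    apply measure_null_of_locally_null
    intro z hz
    have hz' : z ∉ measSupp (Function.support ρ) := by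
      rw [hρ.2]
      exact hz.2
    simp only [measSupp, mem_setOf_eq, not_forall, not_lt, nonpos_iff_eq_zero] at hz'
    obtain ⟨r, hr, hvol⟩ := hz'
    refine ⟨(Function.support ρ \ closedBall 0 ε) ∩ ball z r,
      inter_mem_nhdsWithin _ (ball_mem_nhds z hr), ?_⟩
    refine le_antisymm ?_ zero_le
    rw [← hvol]
    exact measure_mono (inter_subset_inter_left _ diff_subset)
  refine measure_mono_null ?_ (measure_union_null key (vol_sphere_zero 0 hε))
  rintro w ⟨hw1, hw2⟩
  by_cases hcb : w ∈ closedBall (0 : EuclideanSpace ℝ (Fin d)) ε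
  · right
    rw [mem_closedBall, dist_zero_right] at hcb
    rw [mem_ball, dist_zero_right] at hw1
    rw [mem_sphere, dist_zero_right]
    exact le_antisymm hcb (not_lt.mp hw1)
  · exact Or.inl ⟨hw2, hcb⟩
lemma ball_eq_univ_of_subsingleton (h : Subsingleton (EuclideanSpace ℝ (Fin d)))
    (z : EuclideanSpace ℝ (Fin d)) {r : ℝ} (hr : 0 < r) :
    ball z r = univ := by
  ext y
  have : y = z := Subsingleton.elim _ _
  simp [mem_ball, this, hr]

lemma vol_ball_two_le (z₁ z₂ : EuclideanSpace ℝ (Fin d)) {r : ℝ} (hr : 0 < r) :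
    volume (ball z₂ (2 * r)) ≤ 2 ^ d * volume (ball z₁ r) := by
  rcases subsingleton_or_nontrivial (EuclideanSpace ℝ (Fin d)) with h | h
  · rw [ball_eq_univ_of_subsingleton h z₂ (by linarith), ball_eq_univ_of_subsingleton h z₁ hr]
    exact le_mul_of_one_le_left zero_le (one_le_pow_of_one_le' one_le_two d)
  · rw [Measure.addHaar_ball volume z₂ (by linarith : (0:ℝ) ≤ 2 * r),
      Measure.addHaar_ball volume z₁ hr.le, finrank_euclideanSpace_fin]
    rw [mul_pow, ENNReal.ofReal_mul (by positivity)]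
    rw [← mul_assoc]
    gcongr
    rw [ENNReal.ofReal_pow (by norm_num)]
    norm_num

/-- quantitative consequence of a density bound -/
lemma diff_small {P : Set (EuclideanSpace ℝ (Fin d))} (hP : MeasurableSet P)
    {z : EuclideanSpace ℝ (Fin d)} {s : ℝ} (hs : 0 < s) {c : ℝ≥0∞} (hc : c ≤ 1)
    (h : c < volume (P ∩ ball z s) / volume (ball z s)) :
    volume (ball z s \ P) < (1 - c) * volume (ball z s) := by
  set vB := volume (ball z s) with hvB
  have hvB0 : vB ≠ 0 := (measure_ball_pos volume z hs).ne'
  have hvBt : vB ≠ ⊤ := measure_ball_lt_top.ne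
  have hmul : c * vB < volume (P ∩ ball z s) :=
    (ENNReal.lt_div_iff_mul_lt (Or.inl hvB0) (Or.inl hvBt)).mp h
  have hkey : volume (P ∩ ball z s) + volume (ball z s \ P) = vB := by
    rw [inter_comm]
    exact measure_inter_add_diff _ hP
  have hfin : volume (ball z s \ P) ≠ ⊤ :=
    ((measure_mono diff_subset).trans_lt measure_ball_lt_top).ne
  have h2 : c * vB + volume (ball z s \ P) < vB := by
    calc c * vB + volume (ball z s \ P)
        < volume (P ∩ ball z s) + volume (ball z s \ P) :=
          ENNReal.add_lt_add_right hfin hmul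
      _ = vB := hkey
  have h3 : vB = c * vB + (1 - c) * vB := by
    rw [← add_mul, add_tsub_cancel_of_le hc, one_mul]
  have h4 : c * vB + volume (ball z s \ P) < c * vB + (1 - c) * vB := by
    rw [← h3]
    exact h2
  exact (ENNReal.add_lt_add_iff_left
    (ENNReal.mul_ne_top (hc.trans_lt ENNReal.one_lt_top).ne hvBt)).mp h4

lemma interJ_pos (hρ : IsFiniteHorizonKernel ε ρ) (hε : 0 < ε)
    {P₁ P₂ : Set (EuclideanSpace ℝ (Fin d))} (hP₁ : MeasurableSet P₁) (hP₂ : MeasurableSet P₂)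
    {z₁ z₂ : EuclideanSpace ℝ (Fin d)} (h₁ : z₁ ∈ densityOne P₁) (h₂ : z₂ ∈ densityOne P₂)
    (hlt : dist z₁ z₂ < ε) :
    0 < interJ ρ P₁ P₂ := by
  classical
  obtain ⟨hρm, hρsupp⟩ := hρ
  set F : EuclideanSpace ℝ (Fin d) → ℝ≥0∞ := fun w => ρ w / ‖w‖₊ with hF
  have hFm : Measurable F := hρm.div measurable_nnnorm.coe_nnreal_ennreal
  set w₀ := z₁ - z₂ with hw₀
  have hw₀n : ‖w₀‖ < ε := by rwa [← dist_eq_norm]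
  -- choose the radius r
  set η : ℝ≥0∞ := (2:ℝ≥0∞)⁻¹ * (2 ^ d)⁻¹ with hη
  have hη0 : η ≠ 0 :=
    mul_ne_zero (ENNReal.inv_ne_zero.mpr ENNReal.ofNat_ne_top)
      (ENNReal.inv_ne_zero.mpr (ENNReal.pow_ne_top ENNReal.ofNat_ne_top))
  have hη1 : η ≤ 1 := by
    rw [hη]
    calc (2:ℝ≥0∞)⁻¹ * (2 ^ d)⁻¹ ≤ 2⁻¹ * 1 := by
          gcongr
          rw [ENNReal.inv_le_one]
          exact one_le_pow_of_one_le' one_le_two d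
      _ ≤ 1 := by norm_num
  have hev1 : ∀ᶠ s in 𝓝[>] (0:ℝ),
      (2:ℝ≥0∞)⁻¹ < volume (P₁ ∩ ball z₁ s) / volume (ball z₁ s) :=
    h₁.eventually (eventually_gt_nhds (by norm_num))
  have hev2 : ∀ᶠ s in 𝓝[>] (0:ℝ),
      1 - η < volume (P₂ ∩ ball z₂ s) / volume (ball z₂ s) :=
    h₂.eventually (eventually_gt_nhds (ENNReal.sub_lt_self ENNReal.one_ne_top one_ne_zero hη0))
  obtain ⟨u₁, hu₁, hI1⟩ := mem_nhdsGT_iff_exists_Ioo_subset.mp hev1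
  obtain ⟨u₂, hu₂, hI2⟩ := mem_nhdsGT_iff_exists_Ioo_subset.mp hev2
  set r : ℝ := min (u₁ / 2) (min (u₂ / 4) ((ε - ‖w₀‖) / 2)) with hr
  have hr0 : 0 < r := by
    refine lt_min (by simpa using hu₁) (lt_min (by simpa using hu₂) (by linarith))
  have hru₁ : r < u₁ := by
    have : r ≤ u₁ / 2 := min_le_left _ _
    have h2 : (0:ℝ) < u₁ := hu₁
    linarith
  have hru₂ : 2 * r < u₂ := by
    have : r ≤ u₂ / 4 := (min_le_right _ _).trans (min_le_left _ _)
    have h2 : (0:ℝ) < u₂ := hu₂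
    linarith
  have hrε : ‖w₀‖ + r < ε := by
    have : r ≤ (ε - ‖w₀‖) / 2 := (min_le_right _ _).trans (min_le_right _ _)
    linarith
  -- density estimates at scale r and 2r
  have hd1 : volume (ball z₁ r \ P₁) < (1 - 2⁻¹) * volume (ball z₁ r) :=
    diff_small hP₁ hr0 (by norm_num) (hI1 ⟨hr0, hru₁⟩)
  have hd2 : volume (ball z₂ (2 * r) \ P₂) < (1 - (1 - η)) * volume (ball z₂ (2 * r)) :=
    diff_small hP₂ (by linarith) tsub_le_self (hI2 ⟨by linarith, hru₂⟩)
  have hd2' : volume (ball z₂ (2 * r) \ P₂) < 2⁻¹ * volume (ball z₁ r) := by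
    have e1 : (1 - (1 - η)) = η := ENNReal.sub_sub_cancel ENNReal.one_ne_top hη1
    rw [e1] at hd2
    calc volume (ball z₂ (2 * r) \ P₂) < η * volume (ball z₂ (2 * r)) := hd2
      _ ≤ η * (2 ^ d * volume (ball z₁ r)) := by
          gcongr
          exact vol_ball_two_le z₁ z₂ hr0
      _ = 2⁻¹ * ((2 ^ d)⁻¹ * 2 ^ d) * volume (ball z₁ r) := by
          rw [hη]; ring
      _ = 2⁻¹ * volume (ball z₁ r) := by
          rw [ENNReal.inv_mul_cancel (pow_ne_zero d two_ne_zero) (ENNReal.pow_ne_top ENNReal.ofNat_ne_top),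
            mul_one]
  -- the set where the convolution-type factor is positive
  have hQmeas : ∀ w : EuclideanSpace ℝ (Fin d), MeasurableSet {a : EuclideanSpace ℝ (Fin d) | a - w ∈ P₂} :=
    fun w => (measurable_sub_const w) hP₂
  have hgpos : ∀ w ∈ ball w₀ r,
      0 < volume (P₁ ∩ {a | a - w ∈ P₂}) := by
    intro w hw
    set Q := {a : EuclideanSpace ℝ (Fin d) | a - w ∈ P₂} with hQ
    have hdiffQ : volume (ball z₁ r \ Q) = volume (ball (z₁ - w) r \ P₂) := by
      have hpre : (fun a : EuclideanSpace ℝ (Fin d) => a - w) ⁻¹' (ball (z₁ - w) r \ P₂)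
          = ball z₁ r \ Q := by
        ext a
        simp only [mem_preimage, mem_diff, mem_ball, hQ, mem_setOf_eq]
        rw [dist_sub_right]
      rw [← hpre,
        (measurePreserving_sub_right volume w).measure_preimage
          (measurableSet_ball.diff hP₂).nullMeasurableSet]
    have hsub : ball (z₁ - w) r ⊆ ball z₂ (2 * r) := by
      apply ball_subset_ball'
      have : dist (z₁ - w) z₂ = dist w w₀ := by
        rw [dist_eq_norm, dist_eq_norm, hw₀,
          show z₁ - w - z₂ = -(w - (z₁ - z₂)) from by abel, norm_neg]
      rw [this, dist_comm]
      have := mem_ball.mp hw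
      rw [dist_comm] at this
      linarith
    have hdQ : volume (ball z₁ r \ Q) < 2⁻¹ * volume (ball z₁ r) := by
      rw [hdiffQ]
      exact (measure_mono (diff_subset_diff_left hsub)).trans_lt hd2'
    have hd1' : volume (ball z₁ r \ P₁) < 2⁻¹ * volume (ball z₁ r) := by
      rwa [ENNReal.one_sub_inv_two] at hd1
    have hPQ : volume (ball z₁ r \ (P₁ ∩ Q)) < volume (ball z₁ r) := by
      rw [diff_inter]
      calc volume (ball z₁ r \ P₁ ∪ ball z₁ r \ Q)
          ≤ volume (ball z₁ r \ P₁) + volume (ball z₁ r \ Q) := measure_union_le _ _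
        _ < 2⁻¹ * volume (ball z₁ r) + 2⁻¹ * volume (ball z₁ r) := ENNReal.add_lt_add hd1' hdQ
        _ = volume (ball z₁ r) := by
            rw [← add_mul, ENNReal.inv_two_add_inv_two, one_mul]
    have hinter : 0 < volume (ball z₁ r ∩ (P₁ ∩ Q)) := by
      by_contra hcon
      push_neg at hcon
      have h0 : volume (ball z₁ r ∩ (P₁ ∩ Q)) = 0 := le_antisymm hcon zero_le
      have := measure_inter_add_diff (μ := volume) (ball z₁ r) (hP₁.inter (hQmeas w))
      rw [h0, zero_add] at this
      exact absurd this hPQ.ne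
    exact hinter.trans_le (measure_mono inter_subset_right)
  -- rewrite the interaction integral via Fubini and translation
  have hJ : interJ ρ P₁ P₂
      = ∫⁻ w, F w * volume (P₁ ∩ {a | a - w ∈ P₂}) := by
    have hKm : Measurable (Function.uncurry fun a w : EuclideanSpace ℝ (Fin d) =>
        P₁.indicator 1 a * (P₂.indicator 1 (a - w) * F w)) := by
      apply Measurable.mul
      · exact (measurable_one.indicator hP₁).comp measurable_fst
      · apply Measurable.mul
        · exact (measurable_one.indicator hP₂).comp (measurable_fst.sub measurable_snd)
        · exact hFm.comp measurable_snd
    have e1 : interJ ρ P₁ P₂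
        = ∫⁻ a, ∫⁻ w, P₁.indicator 1 a * (P₂.indicator 1 (a - w) * F w) := by
      unfold interJ
      rw [← lintegral_indicator hP₁]
      refine lintegral_congr fun a => ?_
      by_cases ha : a ∈ P₁
      · simp only [Set.indicator_of_mem ha, Pi.one_apply, one_mul]
        have e2 : (∫⁻ b in P₂, ρ (a - b) / edist a b)
            = ∫⁻ b, P₂.indicator (fun b => F (a - b)) b := by
          rw [lintegral_indicator hP₂]
          refine lintegral_congr fun b => ?_
          rw [hF, edist_eq_enorm_sub, enorm_eq_nnnorm]
        have hcomp := (Measure.measurePreserving_sub_left volume a).lintegral_comp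
          (f := P₂.indicator fun b => F (a - b))
          ((hFm.comp (measurable_const.sub measurable_id)).indicator hP₂)
        rw [e2, ← hcomp]
        refine lintegral_congr fun w => ?_
        by_cases hw : a - w ∈ P₂
        · simp only [Set.indicator_of_mem hw, Pi.one_apply, one_mul, sub_sub_cancel]
        · simp [Set.indicator_of_notMem hw]
      · simp [Set.indicator_of_notMem ha]
    rw [e1, lintegral_lintegral_swap hKm.aemeasurable]
    refine lintegral_congr fun w => ?_
    have e3 : ∀ a, P₁.indicator 1 a * (P₂.indicator 1 (a - w) * F w)
        = F w * (P₁ ∩ {a | a - w ∈ P₂}).indicator 1 a := by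
      intro a
      rw [Set.indicator_apply, Set.indicator_apply, Set.indicator_apply]
      by_cases h1 : a ∈ P₁ <;> by_cases h2 : a - w ∈ P₂ <;>
        simp [h1, h2, mem_inter_iff, mem_setOf_eq]
    simp_rw [e3]
    rw [lintegral_const_mul _ (measurable_one.indicator (hP₁.inter (hQmeas w))),
      lintegral_indicator_one (hP₁.inter (hQmeas w))]
  -- conclude positivity
  rw [hJ]
  have hΦm : Measurable fun w => F w * volume (P₁ ∩ {a | a - w ∈ P₂}) := by
    apply hFm.mul
    have hvol : ∀ w, volume (P₁ ∩ {a | a - w ∈ P₂})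
        = ∫⁻ a, P₁.indicator 1 a * P₂.indicator 1 (a - w) := by
      intro w
      rw [← lintegral_indicator_one (hP₁.inter (hQmeas w))]
      refine lintegral_congr fun a => ?_
      rw [Set.indicator_apply, Set.indicator_apply, Set.indicator_apply]
      by_cases h1 : a ∈ P₁ <;> by_cases h2 : a - w ∈ P₂ <;>
        simp [h1, h2, mem_inter_iff, mem_setOf_eq]
    simp_rw [hvol]
    exact Measurable.lintegral_prod_left
      (((measurable_one.indicator hP₁).comp measurable_fst).mul
        ((measurable_one.indicator hP₂).comp (measurable_fst.sub measurable_snd)))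
  rw [lintegral_pos_iff_support hΦm]
  have hsupp : Function.support ρ ∩ ball w₀ r ⊆
      Function.support fun w => F w * volume (P₁ ∩ {a | a - w ∈ P₂}) := by
    rintro w ⟨hwρ, hwb⟩
    simp only [Function.mem_support]
    apply mul_ne_zero
    · rw [hF]
      simp only [ne_eq, ENNReal.div_eq_zero_iff, not_or]
      exact ⟨hwρ, ENNReal.coe_ne_top⟩
    · exact (hgpos w hwb).ne'
  have hw₀mem : w₀ ∈ measSupp (Function.support ρ) := by
    rw [hρsupp]
    exact mem_closedBall_zero_iff.mpr hw₀n.le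
  exact (hw₀mem r hr0).trans_le (measure_mono hsupp)
lemma chain_ivt (hε : 0 < ε) {S T : Set (EuclideanSpace ℝ (Fin d))} :
    ∀ (N : ℕ) (z : ℕ → EuclideanSpace ℝ (Fin d)), z 0 ∈ measSupp S → z N ∈ measSupp T →
      (∀ i ≤ N, z i ∈ measSupp S ∪ measSupp T) → (∀ i < N, dist (z i) (z (i + 1)) < ε) →
      ∃ p q, p ∈ measSupp S ∧ q ∈ measSupp T ∧ dist p q < ε := by
  intro N
  induction N with
  | zero =>
    intro z h0 hN _ _
    exact ⟨z 0, z 0, h0, hN, by simpa using hε⟩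
  | succ n ih =>
    intro z h0 hN hmem hstep
    rcases hmem 1 (by omega) with h1 | h1
    · exact ih (fun i => z (i + 1)) h1 hN (fun i hi => hmem (i + 1) (by omega))
        (fun i hi => hstep (i + 1) (by omega))
    · exact ⟨z 0, z 1, h0, h1, hstep 0 (by omega)⟩

end Aux

/-- Basic properties of `ε`-connected components of a set of finite `𝔓_ε`-perimeter:
(i) `B_ε(x) ∩ E^(1) ⊆ E^x`; (ii) two components either coincide or are at distance `≥ ε`;
(iii) `𝔓_ε(E^x) ≤ 𝔓_ε(E)` and `E^x` is `ε`-indecomposable. -/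
theorem statement3 (d : ℕ) (ε : ℝ) (hε : 0 < ε)
    (ρ : EuclideanSpace ℝ (Fin d) → ℝ≥0∞) (hρ : IsFiniteHorizonKernel ε ρ)
    (A : Set (EuclideanSpace ℝ (Fin d))) (hA : MeasurableSet A)
    (hfin : gagPer ρ A < ⊤)
    (x y : EuclideanSpace ℝ (Fin d)) (hx : x ∈ densityOne A) (hy : y ∈ densityOne A) :
    (ball x ε ∩ densityOne A ⊆ epsComponent ε A x) ∧
    (epsComponent ε A x = epsComponent ε A y ∨
      ENNReal.ofReal ε ≤ setEDist (epsComponent ε A x) (epsComponent ε A y)) ∧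
    (gagPer ρ (epsComponent ε A x) ≤ gagPer ρ A ∧
      ¬ epsDecomposable ρ (epsComponent ε A x)) := by
  classical
  -- Part (i)
  have part1 : ball x ε ∩ densityOne A ⊆ epsComponent ε A x :=
    Aux.ball_inter_densityOne_subset hε hx
  -- Part (ii)
  have part2 : epsComponent ε A x = epsComponent ε A y ∨
      ENNReal.ofReal ε ≤ setEDist (epsComponent ε A x) (epsComponent ε A y) := by
    by_cases heq : epsComponent ε A x = epsComponent ε A y
    · exact Or.inl heq
    · right
      refine le_iInf₂ fun p hp => le_iInf₂ fun q hq => ?_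
      by_contra hlt
      push_neg at hlt
      rw [edist_lt_ofReal] at hlt
      have hq' : q ∈ epsComponent ε A p :=
        Aux.ball_inter_densityOne_subset hε hp.1 ⟨by rwa [mem_ball, dist_comm], hq.1⟩
      have e1 : epsComponent ε A p = epsComponent ε A x := Aux.epsComponent_eq_of_mem hp
      have e2 : epsComponent ε A q = epsComponent ε A y := Aux.epsComponent_eq_of_mem hq
      have e3 : epsComponent ε A q = epsComponent ε A x :=
        Aux.epsComponent_eq_of_mem (e1 ▸ hq')
      exact heq (by rw [← e3, e2])
  -- Setup for part (iii)
  set U : Set (EuclideanSpace ℝ (Fin d)) := ⋃ c ∈ epsComponent ε A x, ball c ε with hU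
  have hUopen : IsOpen U := isOpen_biUnion fun _ _ => isOpen_ball
  have hCU : epsComponent ε A x = U ∩ densityOne A := by
    apply Subset.antisymm
    · intro c hc
      exact ⟨mem_biUnion hc (mem_ball_self hε), hc.1⟩
    · rintro c ⟨hcU, hcd⟩
      obtain ⟨c', hc', hcb⟩ := mem_iUnion₂.mp hcU
      have hmem : c ∈ epsComponent ε A c' :=
        Aux.ball_inter_densityOne_subset hε hc'.1 ⟨hcb, hcd⟩
      rwa [Aux.epsComponent_eq_of_mem hc'] at hmem
  have hdA := Aux.densityOne_ae_eq hA
  have hnull1 : volume (A \ densityOne A) = 0 := (MeasureTheory.ae_eq_set.mp hdA).2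
  set M : Set (EuclideanSpace ℝ (Fin d)) := U ∩ A with hM
  have hMmeas : MeasurableSet M := hUopen.measurableSet.inter hA
  have hMC : M =ᵐ[volume] epsComponent ε A x := by
    rw [hCU]
    exact (Filter.EventuallyEq.refl _ _).inter hdA.symm
  have hMsub : M ⊆ A := inter_subset_right
  have hNmeas : MeasurableSet {w : EuclideanSpace ℝ (Fin d) |
      w ∉ ball (0 : EuclideanSpace ℝ (Fin d)) ε ∧ ρ w ≠ 0} :=
    measurableSet_ball.compl.inter (hρ.1 (measurableSet_singleton 0).compl)
  have hNnull := Aux.kernel_null hρ hε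
  -- zero interaction between M and A \ M
  have hzero : Aux.interJ ρ M (A \ M) = 0 := by
    unfold Aux.interJ
    have hae1 : ∀ᵐ a ∂(volume.restrict M), a ∈ M := ae_restrict_mem hMmeas
    have hae2 : ∀ᵐ a ∂(volume.restrict M), a ∉ A \ densityOne A :=
      ae_restrict_of_ae (measure_eq_zero_iff_ae_notMem.mp hnull1)
    have hkey : ∀ᵐ a ∂(volume.restrict M),
        (∫⁻ b in A \ M, ρ (a - b) / edist a b) = 0 := by
      filter_upwards [hae1, hae2] with a haM haD
      have haC : a ∈ epsComponent ε A x := by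
        rw [hCU]
        exact ⟨haM.1, by_contra fun h => haD ⟨haM.2, h⟩⟩
      have hb1 : ∀ᵐ b ∂(volume.restrict (A \ M)), b ∉ A \ densityOne A :=
        ae_restrict_of_ae (measure_eq_zero_iff_ae_notMem.mp hnull1)
      have hb2 : ∀ᵐ b ∂(volume.restrict (A \ M)),
          a - b ∉ {w : EuclideanSpace ℝ (Fin d) |
            w ∉ ball (0 : EuclideanSpace ℝ (Fin d)) ε ∧ ρ w ≠ 0} := by
        apply ae_restrict_of_ae
        have hpre : volume ((fun b : EuclideanSpace ℝ (Fin d) => a - b) ⁻¹'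
            {w : EuclideanSpace ℝ (Fin d) |
              w ∉ ball (0 : EuclideanSpace ℝ (Fin d)) ε ∧ ρ w ≠ 0}) = 0 := by
          rw [(Measure.measurePreserving_sub_left volume a).measure_preimage
            hNmeas.nullMeasurableSet, hNnull]
        exact measure_eq_zero_iff_ae_notMem.mp hpre
      have hb3 : ∀ᵐ b ∂(volume.restrict (A \ M)), b ∈ A \ M :=
        ae_restrict_mem (hA.diff hMmeas)
      have hzero' : ∀ᵐ b ∂(volume.restrict (A \ M)), ρ (a - b) / edist a b = 0 := by
        filter_upwards [hb1, hb2, hb3] with b hbD hbN hbAM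
        have hbd : b ∈ densityOne A := by_contra fun h => hbD ⟨hbAM.1, h⟩
        have hfar : ¬ dist a b < ε := by
          intro hlt
          have hbC : b ∈ epsComponent ε A a :=
            Aux.ball_inter_densityOne_subset hε haC.1 ⟨by rwa [mem_ball, dist_comm], hbd⟩
          rw [Aux.epsComponent_eq_of_mem haC] at hbC
          have hbM : b ∈ M := ⟨(hCU ▸ hbC).1, hbAM.1⟩
          exact hbAM.2 hbM
        have hρ0 : ρ (a - b) = 0 := by
          by_contra hne
          exact hbN ⟨fun hmem => hfar (by rwa [mem_ball_zero_iff, ← dist_eq_norm] at hmem), hne⟩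
        rw [hρ0, ENNReal.zero_div]
      rw [lintegral_congr_ae hzero', lintegral_zero]
    rw [lintegral_congr_ae hkey, lintegral_zero]
  -- monotonicity
  have hmono : gagPer ρ (epsComponent ε A x) ≤ gagPer ρ A := by
    rw [Aux.gagPer_congr hMC.symm]
    have hMc : Mᶜ = (A \ M) ∪ Aᶜ := by
      ext b
      have hb := @hMsub b
      simp only [mem_compl_iff, mem_union, mem_diff]
      tauto
    have hdisj : Disjoint (A \ M) Aᶜ := disjoint_compl_right.mono_left diff_subset
    calc gagPer ρ M = 2 * Aux.interJ ρ M Mᶜ := Aux.gagPer_eq_interJ M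
      _ = 2 * (Aux.interJ ρ M (A \ M) + Aux.interJ ρ M Aᶜ) := by
          rw [hMc, Aux.interJ_union_right hρ.1 hA.compl hdisj]
      _ = 2 * Aux.interJ ρ M Aᶜ := by rw [hzero, zero_add]
      _ ≤ 2 * Aux.interJ ρ A Aᶜ := by
          gcongr
          exact Aux.interJ_mono hMsub Subset.rfl
      _ = gagPer ρ A := (Aux.gagPer_eq_interJ A).symm
  have hCfin : gagPer ρ (epsComponent ε A x) < ⊤ := hmono.trans_lt hfin
  -- indecomposability
  have part3b : ¬ epsDecomposable ρ (epsComponent ε A x) := by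
    rintro ⟨E₁, E₂, hm1, hm2, hunion, hdisj, hv1, hv2, hf1, hf2, hsum⟩
    have hiden := Aux.gagPer_union_eq hρ.1 hm1 hm2 hdisj
    rw [hunion] at hiden
    rw [hiden] at hsum
    have h0 : (0 : ℝ≥0∞) = 2 * Aux.interJ ρ E₁ E₂ + 2 * Aux.interJ ρ E₂ E₁ := by
      have h' : gagPer ρ (epsComponent ε A x) + 0 = gagPer ρ (epsComponent ε A x) +
          (2 * Aux.interJ ρ E₁ E₂ + 2 * Aux.interJ ρ E₂ E₁) := by
        rw [add_zero, ← add_assoc]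
        exact hsum
      exact (ENNReal.add_right_inj hCfin.ne).mp h'
    have hJ0 : Aux.interJ ρ E₁ E₂ = 0 := by
      rcases add_eq_zero.mp h0.symm with ⟨h1, _⟩
      rcases mul_eq_zero.mp h1 with h | h
      · exact absurd h (by norm_num)
      · exact h
    -- density points of E₁ and E₂
    obtain ⟨p₁, hp₁⟩ : (E₁ ∩ densityOne E₁).Nonempty := by
      apply nonempty_of_measure_ne_zero
      rw [show E₁ ∩ densityOne E₁ = E₁ \ (E₁ \ densityOne E₁) from
          (diff_diff_right_self _ _).symm,
        measure_diff_null (MeasureTheory.ae_eq_set.mp (Aux.densityOne_ae_eq hm1)).2]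
      exact hv1.ne'
    obtain ⟨p₂, hp₂⟩ : (E₂ ∩ densityOne E₂).Nonempty := by
      apply nonempty_of_measure_ne_zero
      rw [show E₂ ∩ densityOne E₂ = E₂ \ (E₂ \ densityOne E₂) from
          (diff_diff_right_self _ _).symm,
        measure_diff_null (MeasureTheory.ae_eq_set.mp (Aux.densityOne_ae_eq hm2)).2]
      exact hv2.ne'
    have hp₁C : p₁ ∈ epsComponent ε A x := by
      rw [← hunion]
      exact Or.inl hp₁.1
    have hp₂C : p₂ ∈ epsComponent ε A x := by
      rw [← hunion]
      exact Or.inr hp₂.1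
    obtain ⟨N, z, hz0, hzN, hzmem, hzstep⟩ :=
      Aux.epsConnected_trans (Aux.epsConnected_symm hp₁C.2) hp₂C.2
    have hzC : ∀ i ≤ N, z i ∈ epsComponent ε A x := by
      intro i hi
      have hconn : epsConnected ε A p₁ (z i) :=
        ⟨i, z, hz0, rfl, fun j hj => hzmem j (hj.trans hi),
          fun j hj => hzstep j (lt_of_lt_of_le hj hi)⟩
      exact ⟨hzmem i hi, Aux.epsConnected_trans hp₁C.2 hconn⟩
    have hzS : ∀ i ≤ N, z i ∈ measSupp (epsComponent ε A x) := by
      intro i hi r hr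
      have hr'0 : 0 < min r ε := lt_min hr hε
      have hsub : A ∩ ball (z i) (min r ε) ∩ densityOne A ⊆
          epsComponent ε A x ∩ ball (z i) r := by
        rintro b ⟨⟨hbA, hbb⟩, hbd⟩
        refine ⟨?_, ball_subset_ball (min_le_left _ _) hbb⟩
        have hbc : b ∈ epsComponent ε A (z i) :=
          Aux.ball_inter_densityOne_subset hε (hzC i hi).1
            ⟨ball_subset_ball (min_le_right _ _) hbb, hbd⟩
        rwa [Aux.epsComponent_eq_of_mem (hzC i hi)] at hbc
      refine lt_of_lt_of_le ?_ (measure_mono hsub)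
      have h1 : 0 < volume (A ∩ ball (z i) (min r ε)) :=
        Aux.vol_inter_ball_pos (hzmem i hi) hr'0
      have h2 : volume ((A ∩ ball (z i) (min r ε)) \ densityOne A) = 0 :=
        measure_mono_null (fun b hb => mem_diff_of_mem hb.1.1 hb.2) hnull1
      calc (0 : ℝ≥0∞) < volume (A ∩ ball (z i) (min r ε)) := h1
        _ = volume ((A ∩ ball (z i) (min r ε)) \
              ((A ∩ ball (z i) (min r ε)) \ densityOne A)) := (measure_diff_null h2).symm
        _ = volume (A ∩ ball (z i) (min r ε) ∩ densityOne A) := by rw [diff_diff_right_self]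
    have hzS12 : ∀ i ≤ N, z i ∈ measSupp E₁ ∪ measSupp E₂ := by
      intro i hi
      apply Aux.measSupp_union E₁ E₂
      rw [hunion]
      exact hzS i hi
    have hp₁S : z 0 ∈ measSupp E₁ := by
      rw [hz0]
      exact Aux.densityOne_subset_measSupp hp₁.2
    have hp₂S : z N ∈ measSupp E₂ := by
      rw [hzN]
      exact Aux.densityOne_subset_measSupp hp₂.2
    obtain ⟨q₁, q₂, hq₁, hq₂, hqd⟩ := Aux.chain_ivt hε N z hp₁S hp₂S hzS12 hzstep
    set δ : ℝ := (ε - dist q₁ q₂) / 4 with hδ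
    have hδ0 : 0 < δ := by
      rw [hδ]
      linarith
    obtain ⟨w₁, hw₁⟩ : ((E₁ ∩ ball q₁ δ) ∩ densityOne (E₁ ∩ ball q₁ δ)).Nonempty := by
      apply nonempty_of_measure_ne_zero
      rw [show (E₁ ∩ ball q₁ δ) ∩ densityOne (E₁ ∩ ball q₁ δ)
            = (E₁ ∩ ball q₁ δ) \ ((E₁ ∩ ball q₁ δ) \ densityOne (E₁ ∩ ball q₁ δ)) from
          (diff_diff_right_self _ _).symm,
        measure_diff_null (MeasureTheory.ae_eq_set.mp
          (Aux.densityOne_ae_eq (hm1.inter measurableSet_ball))).2]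
      exact (hq₁ δ hδ0).ne'
    obtain ⟨w₂, hw₂⟩ : ((E₂ ∩ ball q₂ δ) ∩ densityOne (E₂ ∩ ball q₂ δ)).Nonempty := by
      apply nonempty_of_measure_ne_zero
      rw [show (E₂ ∩ ball q₂ δ) ∩ densityOne (E₂ ∩ ball q₂ δ)
            = (E₂ ∩ ball q₂ δ) \ ((E₂ ∩ ball q₂ δ) \ densityOne (E₂ ∩ ball q₂ δ)) from
          (diff_diff_right_self _ _).symm,
        measure_diff_null (MeasureTheory.ae_eq_set.mp
          (Aux.densityOne_ae_eq (hm2.inter measurableSet_ball))).2]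
      exact (hq₂ δ hδ0).ne'
    have hdist : dist w₁ w₂ < ε := by
      have d1 : dist w₁ q₁ < δ := mem_ball.mp hw₁.1.2
      have d2 : dist w₂ q₂ < δ := mem_ball.mp hw₂.1.2
      have h4 : dist w₁ w₂ ≤ dist w₁ q₁ + dist q₁ q₂ + dist q₂ w₂ := dist_triangle4 _ _ _ _
      rw [dist_comm q₂ w₂] at h4
      rw [hδ] at d1 d2
      linarith
    have hpos := Aux.interJ_pos hρ hε (hm1.inter measurableSet_ball)
      (hm2.inter measurableSet_ball) hw₁.2 hw₂.2 hdist
    have hle : Aux.interJ ρ (E₁ ∩ ball q₁ δ) (E₂ ∩ ball q₂ δ) ≤ Aux.interJ ρ E₁ E₂ :=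
      Aux.interJ_mono inter_subset_left inter_subset_left
    exact (hpos.trans_le (hle.trans hJ0.le)).false
  exact ⟨part1, part2, hmono, part3b⟩

end
end

section
/- Let ε > 0, ρ_ε a finite-horizon kernel, and E ⊆ ℝ^d a set of finite 𝔓_ε-perimeter. Then there exists a unique (up to reindexing) at most countable collection {E^{x_i}}_{i∈I} of ε-connected components of E such that each E^{x_i} is ε-indecomposable, |E^{x_i}| > 0, the sets E^{x_i} are pairwise disjoint with ⋃_{i∈I} E^{x_i} = E^(1), and 𝔓_ε(E) = Σ_{i∈I} 𝔓_ε(E^{x_i}). -/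
open MeasureTheory Metric Set Filter
open scoped ENNReal Topology

noncomputable section

variable {d : ℕ}

lemma aux_ball_cap (A : Set (EuclideanSpace ℝ (Fin d))) (x : EuclideanSpace ℝ (Fin d))
    {r : ℝ} (hr : 0 < r) : volume (A ∩ ball x r) = volume (A ∩ closedBall x r) := by
  refine le_antisymm (measure_mono (inter_subset_inter_right _ ball_subset_closedBall)) ?_
  have h1 : A ∩ closedBall x r ⊆ (A ∩ ball x r) ∪ sphere x r := by
    rw [← ball_union_sphere]; intro y hy
    rcases hy.2 with h | h
    · exact Or.inl ⟨hy.1, h⟩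
    · exact Or.inr h
  calc volume (A ∩ closedBall x r) ≤ volume ((A ∩ ball x r) ∪ sphere x r) := measure_mono h1
    _ ≤ volume (A ∩ ball x r) + volume (sphere x r) := measure_union_le _ _
    _ = volume (A ∩ ball x r) := by
        rw [Measure.addHaar_sphere_of_ne_zero volume x hr.ne', add_zero]

lemma aux_ball_vol (x : EuclideanSpace ℝ (Fin d)) {r : ℝ} (hr : 0 < r) :
    volume (ball x r) = volume (closedBall x r) := by
  simpa using aux_ball_cap univ x hr

lemma aux_ratio_eqv (A : Set (EuclideanSpace ℝ (Fin d))) (x : EuclideanSpace ℝ (Fin d)) :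
    (fun r : ℝ => volume (A ∩ ball x r) / volume (ball x r))
      =ᶠ[𝓝[>] (0:ℝ)] fun r => volume (A ∩ closedBall x r) / volume (closedBall x r) := by
  filter_upwards [eventually_mem_nhdsWithin] with r (hr : 0 < r)
  rw [aux_ball_cap A x hr, aux_ball_vol x hr]

lemma aux_mem_densityOne_iff {A : Set (EuclideanSpace ℝ (Fin d))} {x : EuclideanSpace ℝ (Fin d)} :
    x ∈ densityOne A ↔ Tendsto
      (fun r : ℝ => volume (A ∩ closedBall x r) / volume (closedBall x r)) (𝓝[>] 0) (𝓝 1) := by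
  constructor
  · intro h; exact h.congr' (aux_ratio_eqv A x)
  · intro h; exact h.congr' (aux_ratio_eqv A x).symm

lemma aux_pos_ball {A : Set (EuclideanSpace ℝ (Fin d))} {x : EuclideanSpace ℝ (Fin d)}
    (hx : x ∈ densityOne A) {r : ℝ} (hr : 0 < r) : 0 < volume (A ∩ ball x r) := by
  have h1 : ∀ᶠ s in 𝓝[>] (0:ℝ),
      volume (A ∩ ball x s) / volume (ball x s) ≠ 0 := hx.eventually_ne one_ne_zero
  have h2 : ∀ᶠ s in 𝓝[>] (0:ℝ), s ∈ Ioo 0 r := Ioo_mem_nhdsGT_of_mem ⟨le_rfl, hr⟩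
  obtain ⟨s, hs1, hs2⟩ := (h1.and h2).exists
  have : volume (A ∩ ball x s) ≠ 0 := by
    intro h0; rw [h0, ENNReal.zero_div] at hs1; exact hs1 rfl
  have hpos : 0 < volume (A ∩ ball x s) := pos_iff_ne_zero.mpr this
  exact hpos.trans_le (measure_mono (inter_subset_inter_right _ (ball_subset_ball hs2.2.le)))

lemma aux_densityOne_ae {A : Set (EuclideanSpace ℝ (Fin d))} (hA : MeasurableSet A) :
    densityOne A =ᵐ[volume] A := by
  rw [MeasureTheory.ae_eq_set]
  constructor
  · -- densityOne A \ A is null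
    have H2 := Besicovitch.ae_tendsto_measure_inter_div (volume) Aᶜ
    rw [MeasureTheory.ae_iff] at H2
    -- H2 : restrict Aᶜ of the non-tendsto set is 0
    have key : densityOne A \ A ⊆
        {x | ¬ Tendsto (fun r => volume (Aᶜ ∩ closedBall x r) / volume (closedBall x r))
          (𝓝[>] 0) (𝓝 1)} ∩ Aᶜ := by
      rintro x ⟨hx1, hx2⟩
      refine ⟨?_, hx2⟩
      intro hcon
      have hc : Tendsto (fun r : ℝ => volume (Aᶜ ∩ ball x r) / volume (ball x r))
          (𝓝[>] 0) (𝓝 1) := hcon.congr' (aux_ratio_eqv Aᶜ x).symm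
      have hsum : Tendsto (fun r : ℝ => volume (A ∩ ball x r) / volume (ball x r)
          + volume (Aᶜ ∩ ball x r) / volume (ball x r)) (𝓝[>] 0) (𝓝 2) := by
        have := hx1.add hc
        norm_num at this ⊢
        exact this
      have hone : ∀ᶠ r in 𝓝[>] (0:ℝ), volume (A ∩ ball x r) / volume (ball x r)
          + volume (Aᶜ ∩ ball x r) / volume (ball x r) = 1 := by
        filter_upwards [eventually_mem_nhdsWithin] with r (hr : 0 < r)
        rw [ENNReal.div_add_div_same]
        have hv : volume (A ∩ ball x r) + volume (Aᶜ ∩ ball x r) = volume (ball x r) := by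
          have := measure_inter_add_diff (μ := volume) (ball x r) hA
          rw [diff_eq] at this
          rw [inter_comm A, inter_comm Aᶜ]
          exact this
        rw [hv, ENNReal.div_self (measure_ball_pos volume x hr).ne' measure_ball_lt_top.ne]
      have h1 : Tendsto (fun _ : ℝ => (1:ℝ≥0∞)) (𝓝[>] (0:ℝ)) (𝓝 2) :=
        hsum.congr' hone
      have := tendsto_nhds_unique h1 tendsto_const_nhds
      norm_num at this
    have hnull : volume ({x | ¬ Tendsto
        (fun r => volume (Aᶜ ∩ closedBall x r) / volume (closedBall x r)) (𝓝[>] 0) (𝓝 1)} ∩ Aᶜ)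
        = 0 := by
      have := H2
      rwa [Measure.restrict_apply' hA.compl] at this
    exact measure_mono_null key hnull
  · -- A \ densityOne A is null
    have H1 := Besicovitch.ae_tendsto_measure_inter_div (volume) A
    rw [MeasureTheory.ae_iff] at H1
    have key : A \ densityOne A ⊆
        {x | ¬ Tendsto (fun r => volume (A ∩ closedBall x r) / volume (closedBall x r))
          (𝓝[>] 0) (𝓝 1)} ∩ A := by
      rintro x ⟨hx1, hx2⟩
      refine ⟨?_, hx1⟩
      intro hcon
      exact hx2 (aux_mem_densityOne_iff.mpr hcon)
    have hnull : volume ({x | ¬ Tendsto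
        (fun r => volume (A ∩ closedBall x r) / volume (closedBall x r)) (𝓝[>] 0) (𝓝 1)} ∩ A)
        = 0 := by
      have := H1
      rwa [Measure.restrict_apply' hA] at this
    exact measure_mono_null key hnull


lemma aux_rho_null {ε : ℝ} {ρ : EuclideanSpace ℝ (Fin d) → ℝ≥0∞}
    (hρ : IsFiniteHorizonKernel ε ρ) :
    volume (Function.support ρ ∩ (closedBall (0 : EuclideanSpace ℝ (Fin d)) ε)ᶜ) = 0 := by
  set V := (closedBall (0 : EuclideanSpace ℝ (Fin d)) ε)ᶜ with hV
  have hx : ∀ x : V, ∃ r : ℝ, 0 < r ∧ volume (Function.support ρ ∩ ball x.1 r) = 0 := by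
    rintro ⟨x, hx⟩
    have : x ∉ measSupp (Function.support ρ) := by rw [hρ.2]; exact hx
    rw [measSupp, mem_setOf_eq] at this
    push_neg at this
    obtain ⟨r, hr, hr0⟩ := this
    exact ⟨r, hr, le_antisymm hr0 zero_le⟩
  choose r hr hz using hx
  obtain ⟨T, hTc, hTeq⟩ := TopologicalSpace.isOpen_iUnion_countable
    (fun x : V => ball x.1 (r x)) (fun x => isOpen_ball)
  have cover : Function.support ρ ∩ V ⊆ ⋃ i ∈ T, Function.support ρ ∩ ball i.1 (r i) := by
    rintro y ⟨hy1, hy2⟩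
    have : y ∈ ⋃ i : V, ball (i : EuclideanSpace ℝ (Fin d)) (r i) :=
      mem_iUnion.mpr ⟨⟨y, hy2⟩, mem_ball_self (hr ⟨y, hy2⟩)⟩
    rw [← hTeq] at this
    obtain ⟨i, hi, hyi⟩ := mem_iUnion₂.mp this
    exact mem_iUnion₂.mpr ⟨i, hi, hy1, hyi⟩
  refine measure_mono_null cover ?_
  rw [measure_biUnion_null_iff hTc]
  exact fun i _ => hz i

lemma aux_k_meas {ρ : EuclideanSpace ℝ (Fin d) → ℝ≥0∞} (hρm : Measurable ρ) :
    Measurable (fun p : EuclideanSpace ℝ (Fin d) × EuclideanSpace ℝ (Fin d) =>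
      ρ (p.1 - p.2) / edist p.1 p.2) :=
  (hρm.comp (measurable_fst.sub measurable_snd)).div measurable_edist

lemma aux_g_meas {ρ : EuclideanSpace ℝ (Fin d) → ℝ≥0∞} (hρm : Measurable ρ)
    (ν : Measure (EuclideanSpace ℝ (Fin d))) [SFinite ν] :
    Measurable (fun x => ∫⁻ y, ρ (x - y) / edist x y ∂ν) :=
  Measurable.lintegral_prod_right (f := fun x y => ρ (x - y) / edist x y) (aux_k_meas hρm)

lemma aux_inner_far_zero {ε : ℝ} (hε : 0 < ε) {ρ : EuclideanSpace ℝ (Fin d) → ℝ≥0∞}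
    (hρ : IsFiniteHorizonKernel ε ρ) (x : EuclideanSpace ℝ (Fin d))
    {Q : Set (EuclideanSpace ℝ (Fin d))} (hQ : ∀ y ∈ Q, ε ≤ dist x y) :
    ∫⁻ y in Q, ρ (x - y) / edist x y = 0 := by
  have hρm := hρ.1
  set C := (ball x ε)ᶜ with hC
  have hQC : Q ⊆ C := by
    intro y hy
    simp only [hC, mem_compl_iff, mem_ball]
    rw [dist_comm]
    exact fun h => absurd (hQ y hy) (not_le.mpr h)
  refine le_antisymm ?_ zero_le
  refine le_trans (lintegral_mono_set hQC) (le_of_eq ?_)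
  have hCm : MeasurableSet C := measurableSet_ball.compl
  have hae : ∀ᵐ y ∂(volume.restrict C), ρ (x - y) / edist x y = 0 := by
    rw [MeasureTheory.ae_iff, Measure.restrict_apply' hCm]
    set N := Function.support ρ ∩ (closedBall (0 : EuclideanSpace ℝ (Fin d)) ε)ᶜ with hN
    have hNm : MeasurableSet N :=
      (measurableSet_support hρm).inter measurableSet_closedBall.compl
    have hsub : {y | ¬ ρ (x - y) / edist x y = 0} ∩ C ⊆
        ((fun y => x - y) ⁻¹' N) ∪ sphere x ε := by
      rintro y ⟨hy1, hy2⟩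
      have hρy : ρ (x - y) ≠ 0 := by
        intro h0
        exact hy1 (by rw [h0, ENNReal.zero_div])
      have hdist : ε ≤ dist x y := by
        simp only [hC, mem_compl_iff, mem_ball] at hy2
        rw [dist_comm] at hy2; exact not_lt.mp hy2
      rcases eq_or_lt_of_le hdist with heq | hlt
      · right
        simp only [mem_sphere, dist_comm]
        exact heq.symm
      · left
        refine ⟨hρy, ?_⟩
        simp only [mem_compl_iff, mem_closedBall_zero_iff]
        rw [← dist_eq_norm]
        exact not_le.mpr hlt
    refine measure_mono_null hsub (measure_union_null ?_ ?_)
    · have hmp := Measure.measurePreserving_sub_left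
        (volume : Measure (EuclideanSpace ℝ (Fin d))) x
      rw [hmp.measure_preimage hNm.nullMeasurableSet]
      exact aux_rho_null hρ
    · exact Measure.addHaar_sphere_of_ne_zero volume x hε.ne'
  rw [lintegral_congr_ae hae, lintegral_zero]


section Conn

variable {ε : ℝ} {A : Set (EuclideanSpace ℝ (Fin d))} {x y w : EuclideanSpace ℝ (Fin d)}

lemma aux_conn_refl (hx : x ∈ densityOne A) : epsConnected ε A x x :=
  ⟨0, fun _ => x, rfl, rfl, fun _ _ => hx, fun i h => absurd h (Nat.not_lt_zero i)⟩

lemma aux_conn_symm (h : epsConnected ε A x y) : epsConnected ε A y x := by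
  obtain ⟨N, z, h0, hN, hmem, hd⟩ := h
  refine ⟨N, fun i => z (N - i), by simp [hN], by simp [h0],
    fun i _ => hmem _ (Nat.sub_le _ _), ?_⟩
  intro i hi
  have h' := hd (N - (i + 1)) (by omega)
  rw [show N - (i + 1) + 1 = N - i from by omega] at h'
  simpa [dist_comm] using h'

lemma aux_conn_trans (h1 : epsConnected ε A x y) (h2 : epsConnected ε A y w) :
    epsConnected ε A x w := by
  obtain ⟨N, z, hz0, hzN, hzmem, hzd⟩ := h1
  obtain ⟨M, u, hu0, huM, humem, hud⟩ := h2
  refine ⟨N + M, fun i => if i ≤ N then z i else u (i - N), by simp [hz0], ?_, ?_, ?_⟩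
  · beta_reduce
    by_cases h : M = 0
    · subst h
      rw [Nat.add_zero, if_pos le_rfl, hzN, ← hu0]
      exact huM
    · rw [if_neg (by omega)]
      simpa using huM
  · intro i hi
    beta_reduce
    by_cases h : i ≤ N
    · simpa [h] using hzmem i h
    · rw [if_neg h]; exact humem _ (by omega)
  · intro i hi
    beta_reduce
    rcases lt_trichotomy i N with h | h | h
    · rw [if_pos h.le, if_pos (by omega : i + 1 ≤ N)]; exact hzd i h
    · subst h
      rw [if_pos le_rfl, if_neg (by omega), hzN, ← hu0,
        show i + 1 - i = 0 + 1 from by omega]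
      exact hud 0 (by omega)
    · rw [if_neg (by omega), if_neg (by omega), show i + 1 - N = (i - N) + 1 from by omega]
      exact hud _ (by omega)

lemma aux_mem_comp_self (hx : x ∈ densityOne A) : x ∈ epsComponent ε A x :=
  ⟨hx, aux_conn_refl hx⟩

lemma aux_comp_eq (hy : y ∈ epsComponent ε A x) :
    epsComponent ε A y = epsComponent ε A x := by
  ext v
  constructor
  · rintro ⟨hv, hc⟩; exact ⟨hv, aux_conn_trans hy.2 hc⟩
  · rintro ⟨hv, hc⟩; exact ⟨hv, aux_conn_trans (aux_conn_symm hy.2) hc⟩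

lemma aux_comp_extend (hy : y ∈ epsComponent ε A x) (hw : w ∈ densityOne A)
    (hd : dist y w < ε) : w ∈ epsComponent ε A x := by
  refine ⟨hw, aux_conn_trans hy.2 ?_⟩
  refine ⟨1, fun i => if i = 0 then y else w, by simp, by simp, ?_, ?_⟩
  · intro i _
    by_cases h : i = 0
    · simpa [h] using hy.1
    · simpa [h] using hw
  · intro i hi
    have : i = 0 := by omega
    simpa [this] using hd

lemma aux_comp_disjoint (h : epsComponent ε A x ≠ epsComponent ε A x') :
    Disjoint (epsComponent ε A x) (epsComponent ε A x') := by
  by_contra hc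
  rw [Set.not_disjoint_iff] at hc
  obtain ⟨v, hv1, hv2⟩ := hc
  exact h ((aux_comp_eq hv1).symm.trans (aux_comp_eq hv2))

lemma aux_dist_ge (hy : y ∈ epsComponent ε A x) (hw : w ∈ densityOne A)
    (hwn : w ∉ epsComponent ε A x) : ε ≤ dist y w :=
  not_lt.mp fun h => hwn (aux_comp_extend hy hw h)

lemma aux_comp_eq_inter (hε : 0 < ε) (x : EuclideanSpace ℝ (Fin d)) :
    epsComponent ε A x = densityOne A ∩ (⋃ y : epsComponent ε A x, ball y.1 ε) := by
  ext v
  constructor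
  · intro hv
    exact ⟨hv.1, mem_iUnion.mpr ⟨⟨v, hv⟩, mem_ball_self hε⟩⟩
  · rintro ⟨hv, hu⟩
    obtain ⟨q, hq⟩ := mem_iUnion.mp hu
    exact aux_comp_extend q.2 hv (by rwa [dist_comm, ← mem_ball])

lemma aux_comp_repr (hε : 0 < ε) (hA : MeasurableSet A) (x : EuclideanSpace ℝ (Fin d)) :
    ∃ U : Set (EuclideanSpace ℝ (Fin d)), IsOpen U ∧
      epsComponent ε A x = densityOne A ∩ U ∧
      epsComponent ε A x =ᵐ[volume] ((A ∩ U : Set (EuclideanSpace ℝ (Fin d)))) := by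
  obtain ⟨U, hUo, hUeq⟩ : ∃ U : Set (EuclideanSpace ℝ (Fin d)), IsOpen U ∧
      epsComponent ε A x = densityOne A ∩ U :=
    ⟨_, isOpen_iUnion (fun _ => isOpen_ball), aux_comp_eq_inter hε x⟩
  refine ⟨U, hUo, hUeq, ?_⟩
  rw [hUeq]
  exact ae_eq_set_inter (aux_densityOne_ae hA) EventuallyEq.rfl

lemma aux_comp_pos (hε : 0 < ε) (hA : MeasurableSet A) (hx : x ∈ densityOne A) :
    0 < volume (epsComponent ε A x) := by
  have hsub : densityOne A ∩ ball x ε ⊆ epsComponent ε A x := by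
    rintro v ⟨hv1, hv2⟩
    exact aux_comp_extend (aux_mem_comp_self hx) hv1 (by rwa [mem_ball, dist_comm] at hv2)
  have h1 : volume (densityOne A ∩ ball x ε) = volume (A ∩ ball x ε) :=
    measure_congr (ae_eq_set_inter (aux_densityOne_ae hA) EventuallyEq.rfl)
  calc (0:ℝ≥0∞) < volume (A ∩ ball x ε) := aux_pos_ball hx hε
    _ = volume (densityOne A ∩ ball x ε) := h1.symm
    _ ≤ volume (epsComponent ε A x) := measure_mono hsub

end Conn

section Cross

variable {ε : ℝ} {ρ : EuclideanSpace ℝ (Fin d) → ℝ≥0∞}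

lemma aux_exists_density {B W : Set (EuclideanSpace ℝ (Fin d))} (hB : MeasurableSet B)
    (hW : 0 < volume (W ∩ B)) :
    ∃ p ∈ W ∩ B, Tendsto (fun r => volume (B ∩ closedBall p r) / volume (closedBall p r))
      (𝓝[>] (0:ℝ)) (𝓝 1) := by
  set P := {p : EuclideanSpace ℝ (Fin d) | Tendsto
    (fun r => volume (B ∩ closedBall p r) / volume (closedBall p r)) (𝓝[>] (0:ℝ)) (𝓝 1)} with hP
  have hbes := Besicovitch.ae_tendsto_measure_inter_div (volume) B
  rw [MeasureTheory.ae_iff, Measure.restrict_apply' hB] at hbes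
  have hsplit : W ∩ B ⊆ ((W ∩ P) ∩ B) ∪ ({p | ¬ p ∈ P} ∩ B) := by
    rintro q ⟨hq1, hq2⟩
    by_cases h : q ∈ P
    · exact Or.inl ⟨⟨hq1, h⟩, hq2⟩
    · exact Or.inr ⟨h, hq2⟩
  have hpos : 0 < volume ((W ∩ P) ∩ B) := by
    by_contra hc
    push_neg at hc
    have h0 : volume ((W ∩ P) ∩ B) = 0 := le_antisymm hc zero_le
    have := measure_mono_null hsplit (measure_union_null h0 hbes)
    exact absurd this hW.ne'
  obtain ⟨q, hq⟩ := nonempty_of_measure_ne_zero hpos.ne'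
  exact ⟨q, ⟨hq.1.1, hq.2⟩, hq.1.2⟩

lemma aux_supp_of_density {B : Set (EuclideanSpace ℝ (Fin d))} {p : EuclideanSpace ℝ (Fin d)}
    (h : Tendsto (fun r => volume (B ∩ closedBall p r) / volume (closedBall p r))
      (𝓝[>] (0:ℝ)) (𝓝 1)) {r : ℝ} (hr : 0 < r) : 0 < volume (B ∩ ball p r) := by
  have h1 := h.eventually_ne one_ne_zero
  have h2 : ∀ᶠ s in 𝓝[>] (0:ℝ), s ∈ Ioo 0 r := Ioo_mem_nhdsGT_of_mem ⟨le_rfl, hr⟩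
  obtain ⟨s, hs1, hs2⟩ := (h1.and h2).exists
  have hne : volume (B ∩ closedBall p s) ≠ 0 := by
    intro h0; rw [h0, ENNReal.zero_div] at hs1; exact hs1 rfl
  exact (pos_iff_ne_zero.mpr hne).trans_le
    (measure_mono (inter_subset_inter_right _ (closedBall_subset_ball hs2.2)))

lemma aux_cross_pos (hε : 0 < ε) (hρ : IsFiniteHorizonKernel ε ρ)
    {B₁ B₂ : Set (EuclideanSpace ℝ (Fin d))} (h1m : MeasurableSet B₁) (h2m : MeasurableSet B₂)
    {a b : EuclideanSpace ℝ (Fin d)}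
    (ha : ∀ r : ℝ, 0 < r → 0 < volume (B₁ ∩ ball a r))
    (hb : ∀ r : ℝ, 0 < r → 0 < volume (B₂ ∩ ball b r))
    (hab : dist a b < ε) :
    0 < ∫⁻ x in B₁, ∫⁻ y in B₂, ρ (x - y) / edist x y := by
  -- Step A : density points
  set r₀ := (ε - dist a b) / 3 with hr₀def
  have hr₀ : 0 < r₀ := by rw [hr₀def]; linarith
  obtain ⟨a', ⟨ha'ball, -⟩, ha'd⟩ := aux_exists_density h1m
    (by rw [inter_comm]; exact ha r₀ hr₀ : 0 < volume (ball a r₀ ∩ B₁))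
  obtain ⟨b', ⟨hb'ball, -⟩, hb'd⟩ := aux_exists_density h2m
    (by rw [inter_comm]; exact hb r₀ hr₀ : 0 < volume (ball b r₀ ∩ B₂))
  have hd' : dist a' b' < ε := by
    have t1 : dist a' b' ≤ dist a' a + dist a b + dist b b' := dist_triangle4 a' a b b'
    have t2 : dist a' a < r₀ := mem_ball.mp ha'ball
    have t3 : dist b b' < r₀ := by rw [dist_comm]; exact mem_ball.mp hb'ball
    rw [hr₀def] at t2 t3
    linarith
  set u₀ := a' - b' with hu₀def
  have hu₀ : ‖u₀‖ < ε := by rwa [hu₀def, ← dist_eq_norm]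
  -- Step B : choose τ
  obtain ⟨τ, hτd, hτ⟩ : ∃ τ : ℝ, (1 + τ) ^ d < 3/2 ∧ 0 < τ := by
    have hcont : Tendsto (fun t : ℝ => (1 + t) ^ d) (𝓝 0) (𝓝 1) := by
      have hc : Continuous fun t : ℝ => (1 + t) ^ d := by continuity
      have := hc.tendsto (0:ℝ)
      simpa using this
    have h1 : ∀ᶠ t in 𝓝[>] (0:ℝ), (1 + t) ^ d < 3/2 :=
      eventually_nhdsWithin_of_eventually_nhds
        (hcont.eventually_lt_const (by norm_num : (1:ℝ) < 3/2))
    obtain ⟨τ, h1, h2⟩ := (h1.and eventually_mem_nhdsWithin).exists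
    exact ⟨τ, h1, h2⟩
  -- Step C : choose δ
  have hq34 : (ENNReal.ofReal (3/4) : ℝ≥0∞) < 1 := by
    rw [← ENNReal.ofReal_one]
    exact ENNReal.ofReal_lt_ofReal_iff_of_nonneg (by norm_num) |>.mpr (by norm_num)
  have e1 : ∀ᶠ δ in 𝓝[>] (0:ℝ), ENNReal.ofReal (3/4)
      < volume (B₁ ∩ closedBall a' δ) / volume (closedBall a' δ) :=
    ha'd.eventually (lt_mem_nhds hq34)
  have e2 : ∀ᶠ δ in 𝓝[>] (0:ℝ), ENNReal.ofReal (3/4)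
      < volume (B₂ ∩ closedBall b' δ) / volume (closedBall b' δ) :=
    hb'd.eventually (lt_mem_nhds hq34)
  have e3 : ∀ᶠ δ in 𝓝[>] (0:ℝ), δ ∈ Ioo 0 ((ε - ‖u₀‖) / 2) :=
    Ioo_mem_nhdsGT_of_mem ⟨le_rfl, by linarith⟩
  obtain ⟨δ, hδ1, hδ2, hδ3⟩ := (e1.and (e2.and e3)).exists
  have hδ : 0 < δ := hδ3.1
  have hδε : δ + ‖u₀‖ + δ ≤ ε := by
    have := hδ3.2
    linarith
  set σ := τ * δ with hσdef
  have hσ : 0 < σ := mul_pos hτ hδ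
  set m := volume (closedBall (0 : EuclideanSpace ℝ (Fin d)) δ) with hmdef
  have hm0 : m ≠ 0 := (measure_closedBall_pos volume 0 hδ).ne'
  have hmtop : m ≠ ⊤ := measure_closedBall_lt_top.ne
  set S := B₁ ∩ closedBall a' δ with hSdef
  set T := B₂ ∩ closedBall b' δ with hTdef
  have hSm : MeasurableSet S := h1m.inter measurableSet_closedBall
  have hTm : MeasurableSet T := h2m.inter measurableSet_closedBall
  have hSlow : ENNReal.ofReal (3/4) * m < volume S := by
    have h := hδ1
    rw [Measure.addHaar_closedBall_center volume a' δ] at h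
    exact (ENNReal.lt_div_iff_mul_lt (Or.inl hm0) (Or.inl hmtop)).mp h
  have hTlow : ENNReal.ofReal (3/4) * m < volume T := by
    have h := hδ2
    rw [Measure.addHaar_closedBall_center volume b' δ] at h
    exact (ENNReal.lt_div_iff_mul_lt (Or.inl hm0) (Or.inl hmtop)).mp h
  set K := volume (closedBall a' (δ + σ)) with hKdef
  have hKval : K = ENNReal.ofReal ((1 + τ) ^ d) * m := by
    rw [hKdef, show δ + σ = (1 + τ) * δ by rw [hσdef]; ring]
    rw [Measure.addHaar_closedBall_mul_of_pos volume a' (by linarith : (0:ℝ) < 1 + τ) δ]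
    rw [hmdef, finrank_euclideanSpace_fin]
  have hKlt : K < ENNReal.ofReal (3/2) * m := by
    rw [hKval]
    refine ENNReal.mul_lt_mul_left hm0 hmtop ?_
    exact ENNReal.ofReal_lt_ofReal_iff_of_nonneg (by positivity) |>.mpr hτd
  set c₀ := ENNReal.ofReal (3/2) * m - K with hc₀def
  have hc₀ : 0 < c₀ := tsub_pos_of_lt hKlt
  have hc₀top : c₀ ≠ ⊤ := by
    refine ne_top_of_le_ne_top ?_ tsub_le_self
    exact ENNReal.mul_ne_top ENNReal.ofReal_ne_top hmtop
  -- Step D : uniform overlap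
  have hover : ∀ u ∈ ball u₀ σ, c₀ ≤ volume (S ∩ ((fun v => v - u) ⁻¹' T)) := by
    intro u hu
    set Tu := (fun v => v - u) ⁻¹' T with hTudef
    have hTum : MeasurableSet Tu := hTm.preimage (measurable_id.sub measurable_const)
    have hvolTu : volume Tu = volume T := by
      have : (fun v : EuclideanSpace ℝ (Fin d) => v - u) = fun v => v + (-u) := by
        funext v; rw [sub_eq_add_neg]
      rw [hTudef, this]
      exact measure_preimage_add_right volume (-u) T
    have hsub : S ∪ Tu ⊆ closedBall a' (δ + σ) := by
      rintro v (hv | hv)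
      · exact closedBall_subset_closedBall (by linarith : δ ≤ δ + σ) hv.2
      · have hvT : v - u ∈ T := hv
        have hd1 : dist (v - u) b' ≤ δ := mem_closedBall.mp hvT.2
        have hd2 : dist u u₀ ≤ σ := (mem_ball.mp hu).le
        have : v - a' = ((v - u) - b') + (u - u₀) := by
          rw [hu₀def]; abel
        rw [mem_closedBall, dist_eq_norm, this]
        calc ‖((v - u) - b') + (u - u₀)‖ ≤ ‖(v - u) - b'‖ + ‖u - u₀‖ := norm_add_le _ _
          _ ≤ δ + σ := by
              rw [← dist_eq_norm, ← dist_eq_norm]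
              exact add_le_add hd1 hd2
    have hincl := measure_union_add_inter S hTum (μ := volume)
    have hKbound : volume (S ∪ Tu) ≤ K := measure_mono hsub
    have hsum : ENNReal.ofReal (3/2) * m ≤ volume S + volume Tu := by
      rw [hvolTu]
      calc ENNReal.ofReal (3/2) * m = ENNReal.ofReal (3/4) * m + ENNReal.ofReal (3/4) * m := by
            rw [← add_mul, ← ENNReal.ofReal_add (by norm_num) (by norm_num)]
            norm_num
        _ ≤ volume S + volume T := add_le_add hSlow.le hTlow.le
    rw [tsub_le_iff_right]
    calc ENNReal.ofReal (3/2) * m ≤ volume S + volume Tu := hsum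
      _ = volume (S ∪ Tu) + volume (S ∩ Tu) := hincl.symm
      _ ≤ volume (S ∩ Tu) + K := by rw [add_comm]; exact add_le_add_right hKbound _
  -- Step E : the support of ρ near u₀
  have hu₀cb : u₀ ∈ closedBall (0 : EuclideanSpace ℝ (Fin d)) ε :=
    mem_closedBall_zero_iff.mpr hu₀.le
  have hG : 0 < volume (Function.support ρ ∩ ball u₀ σ) := by
    rw [← hρ.2] at hu₀cb
    exact hu₀cb σ hσ
  set G := Function.support ρ ∩ ball u₀ σ with hGdef
  have hGm : MeasurableSet G := (measurableSet_support hρ.1).inter measurableSet_ball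
  have hIρ : 0 < ∫⁻ u in G, ρ u := by
    rw [pos_iff_ne_zero]
    intro hzero
    have hae : ∀ᵐ u ∂(volume.restrict G), ρ u = 0 := (lintegral_eq_zero_iff hρ.1).mp hzero
    have hnull : volume ({u | ¬ ρ u = 0} ∩ G) = 0 := by
      rw [MeasureTheory.ae_iff, Measure.restrict_apply' hGm] at hae
      exact hae
    have heq : {u | ¬ ρ u = 0} ∩ G = G :=
      inter_eq_self_of_subset_right (fun u hu => hu.1)
    rw [heq] at hnull
    exact hG.ne' hnull
  -- J : the convolution integral
  set J := ∫⁻ u, ρ u * volume (S ∩ ((fun v => v - u) ⁻¹' T)) with hJdef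
  have hJpos : 0 < J := by
    have hstep1 : ∫⁻ u in G, ρ u * c₀ ≤ J := by
      refine le_trans ?_ (setLIntegral_le_lintegral G _)
      refine setLIntegral_mono' hGm fun u hu => ?_
      exact mul_le_mul_right (hover u hu.2) (ρ u)
    have hstep2 : (∫⁻ u in G, ρ u) * c₀ = ∫⁻ u in G, ρ u * c₀ :=
      (lintegral_mul_const' c₀ _ hc₀top).symm
    have : 0 < (∫⁻ u in G, ρ u) * c₀ := ENNReal.mul_pos hIρ.ne' hc₀.ne'
    calc (0:ℝ≥0∞) < (∫⁻ u in G, ρ u) * c₀ := this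
      _ = ∫⁻ u in G, ρ u * c₀ := hstep2
      _ ≤ J := hstep1
  -- J equals the double integral over S × T of ρ (x - y)
  have hJ0 : ∫⁻ x in S, ∫⁻ y in T, ρ (x - y) = J := by
    have hsubst : ∀ x : EuclideanSpace ℝ (Fin d),
        ∫⁻ y in T, ρ (x - y) = ∫⁻ u in ((fun u => x - u) ⁻¹' T), ρ u := by
      intro x
      have hemb : MeasurableEmbedding (fun u : EuclideanSpace ℝ (Fin d) => x - u) :=
        (Homeomorph.subLeft x).measurableEmbedding
      have h := (Measure.measurePreserving_sub_left
          (volume : Measure (EuclideanSpace ℝ (Fin d))) x).setLIntegral_comp_preimage_emb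
          hemb ρ ((fun u => x - u) ⁻¹' T)
      have hset : (fun u : EuclideanSpace ℝ (Fin d) => x - u) ⁻¹' ((fun u => x - u) ⁻¹' T)
          = T := by
        ext v; simp [sub_sub_cancel]
      rw [hset] at h
      exact h
    set F : EuclideanSpace ℝ (Fin d) × EuclideanSpace ℝ (Fin d) → ℝ≥0∞ := fun p =>
      S.indicator 1 p.1 * T.indicator 1 (p.1 - p.2) * ρ p.2 with hFdef
    have hFm : Measurable F := by
      refine Measurable.mul (Measurable.mul ?_ ?_) (hρ.1.comp measurable_snd)
      · exact (measurable_one.indicator hSm).comp measurable_fst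
      · exact (measurable_one.indicator hTm).comp (measurable_fst.sub measurable_snd)
    have hleft : ∫⁻ x in S, ∫⁻ y in T, ρ (x - y) = ∫⁻ x, ∫⁻ u, F (x, u) := by
      rw [← lintegral_indicator hSm]
      congr 1
      funext x
      by_cases hx : x ∈ S
      · rw [indicator_of_mem hx, hsubst x]
        have hTxm : MeasurableSet ((fun u : EuclideanSpace ℝ (Fin d) => x - u) ⁻¹' T) :=
          hTm.preimage (measurable_const.sub measurable_id)
        rw [← lintegral_indicator hTxm]
        congr 1
        funext u
        by_cases hu : x - u ∈ T
        · simp [hFdef, Set.indicator_of_mem, hx, hu, Set.indicator_of_mem (mem_preimage.mpr hu)]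
        · simp [hFdef, Set.indicator_of_notMem, hx, hu,
            Set.indicator_of_notMem (fun hc => hu (mem_preimage.mp hc))]
      · rw [indicator_of_notMem hx]
        symm
        simp only [hFdef, Set.indicator_of_notMem hx, zero_mul]
        exact lintegral_zero.trans rfl |>.symm ▸ by simp
    have hswap : ∫⁻ x, ∫⁻ u, F (x, u) = ∫⁻ u, ∫⁻ x, F (x, u) := by
      exact lintegral_lintegral_swap hFm.aemeasurable
    have hright : ∀ u : EuclideanSpace ℝ (Fin d),
        ∫⁻ x, F (x, u) = ρ u * volume (S ∩ ((fun v => v - u) ⁻¹' T)) := by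
      intro u
      have hWm : MeasurableSet (S ∩ ((fun v => v - u) ⁻¹' T)) :=
        hSm.inter (hTm.preimage (measurable_id.sub measurable_const))
      have hpt : ∀ x, F (x, u) = (S ∩ ((fun v => v - u) ⁻¹' T)).indicator 1 x * ρ u := by
        intro x
        by_cases hx : x ∈ S
        · by_cases hxu : x - u ∈ T
          · simp [hFdef, Set.indicator_of_mem, hx, hxu,
              Set.indicator_of_mem (⟨hx, mem_preimage.mpr hxu⟩ :
                x ∈ S ∩ ((fun v => v - u) ⁻¹' T))]
          · have : x ∉ S ∩ ((fun v => v - u) ⁻¹' T) := fun hc => hxu hc.2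
            simp [hFdef, Set.indicator_of_mem hx, Set.indicator_of_notMem hxu,
              Set.indicator_of_notMem this]
        · have : x ∉ S ∩ ((fun v => v - u) ⁻¹' T) := fun hc => hx hc.1
          simp [hFdef, Set.indicator_of_notMem hx, Set.indicator_of_notMem this]
      calc ∫⁻ x, F (x, u) = ∫⁻ x, (S ∩ ((fun v => v - u) ⁻¹' T)).indicator 1 x * ρ u := by
            exact lintegral_congr hpt
        _ = (∫⁻ x, (S ∩ ((fun v => v - u) ⁻¹' T)).indicator 1 x) * ρ u :=
            lintegral_mul_const _ (measurable_one.indicator hWm)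
        _ = volume (S ∩ ((fun v => v - u) ⁻¹' T)) * ρ u := by
            rw [lintegral_indicator_one hWm]
        _ = ρ u * volume (S ∩ ((fun v => v - u) ⁻¹' T)) := mul_comm _ _
    rw [hleft, hswap, hJdef]
    exact lintegral_congr hright
  -- final comparison chain
  have hεinv_top : (ENNReal.ofReal ε)⁻¹ ≠ ⊤ :=
    ENNReal.inv_ne_top.mpr (by simpa using hε)
  have hcomp : (∫⁻ x in S, ∫⁻ y in T, ρ (x - y)) * (ENNReal.ofReal ε)⁻¹
      ≤ ∫⁻ x in S, ∫⁻ y in T, ρ (x - y) / edist x y := by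
    rw [← lintegral_mul_const' _ _ hεinv_top]
    refine setLIntegral_mono' hSm fun x hx => ?_
    rw [← lintegral_mul_const' _ _ hεinv_top]
    refine setLIntegral_mono' hTm fun y hy => ?_
    rw [div_eq_mul_inv]
    refine mul_le_mul_right ?_ (ρ (x - y))
    refine ENNReal.inv_le_inv' ?_
    rw [edist_dist]
    refine ENNReal.ofReal_le_ofReal ?_
    calc dist x y ≤ dist x a' + dist a' b' + dist b' y := dist_triangle4 x a' b' y
      _ ≤ δ + ‖u₀‖ + δ := by
          refine add_le_add (add_le_add (mem_closedBall.mp hx.2) ?_) ?_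
          · rw [hu₀def, ← dist_eq_norm]
          · rw [dist_comm]; exact mem_closedBall.mp hy.2
      _ ≤ ε := hδε
  have hmono : ∫⁻ x in S, ∫⁻ y in T, ρ (x - y) / edist x y
      ≤ ∫⁻ x in B₁, ∫⁻ y in B₂, ρ (x - y) / edist x y := by
    calc ∫⁻ x in S, ∫⁻ y in T, ρ (x - y) / edist x y
        ≤ ∫⁻ x in S, ∫⁻ y in B₂, ρ (x - y) / edist x y :=
          lintegral_mono fun x => lintegral_mono_set inter_subset_left
      _ ≤ ∫⁻ x in B₁, ∫⁻ y in B₂, ρ (x - y) / edist x y :=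
          lintegral_mono_set inter_subset_left
  have hlhs : 0 < (∫⁻ x in S, ∫⁻ y in T, ρ (x - y)) * (ENNReal.ofReal ε)⁻¹ := by
    rw [hJ0]
    exact ENNReal.mul_pos hJpos.ne' (ENNReal.inv_ne_zero.mpr ENNReal.ofReal_ne_top)
  exact hlhs.trans_le (hcomp.trans hmono)

end Cross


section Per

variable {ε : ℝ} {ρ : EuclideanSpace ℝ (Fin d) → ℝ≥0∞} {A : Set (EuclideanSpace ℝ (Fin d))}

lemma aux_ae_compl {μ : Measure (EuclideanSpace ℝ (Fin d))}
    {s t : Set (EuclideanSpace ℝ (Fin d))} (h : s =ᵐ[μ] t) : sᶜ =ᵐ[μ] tᶜ := by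
  filter_upwards [h] with x hx
  simp only [mem_compl_iff, eq_iff_iff] at hx ⊢
  exact not_congr hx

lemma aux_nullm {s t : Set (EuclideanSpace ℝ (Fin d))} (ht : MeasurableSet t)
    (h : s =ᵐ[volume] t) : NullMeasurableSet s volume :=
  (NullMeasurableSet.congr ht.nullMeasurableSet h.symm)

lemma aux_comp_subset_dO {x : EuclideanSpace ℝ (Fin d)} :
    epsComponent ε A x ⊆ densityOne A := fun _ hy => hy.1

/-- For a component `F`, the perimeter of `F` only sees the complement of `densityOne A`. -/
lemma aux_gagPer_comp (hε : 0 < ε) (hρ : IsFiniteHorizonKernel ε ρ) (hA : MeasurableSet A)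
    {x : EuclideanSpace ℝ (Fin d)} (hx : x ∈ densityOne A) :
    gagPer ρ (epsComponent ε A x)
      = 2 * ∫⁻ w in epsComponent ε A x, ∫⁻ y in (densityOne A)ᶜ, ρ (w - y) / edist w y := by
  obtain ⟨U, hUo, hUeq, hUae⟩ := aux_comp_repr hε hA x
  set F := epsComponent ε A x with hF
  set F' := A ∩ U with hF'
  have hF'm : MeasurableSet F' := hA.inter hUo.measurableSet
  have hFsub : F ⊆ densityOne A := aux_comp_subset_dO
  have hsplit : Fᶜ = (densityOne A)ᶜ ∪ (densityOne A \ F) := by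
    ext v
    simp only [mem_compl_iff, mem_union, mem_diff]
    constructor
    · intro hv
      by_cases h : v ∈ densityOne A
      · exact Or.inr ⟨h, hv⟩
      · exact Or.inl h
    · rintro (hv | hv)
      · exact fun hc => hv (hFsub hc)
      · exact hv.2
  have hnm : NullMeasurableSet (densityOne A \ F) volume := by
    have : densityOne A \ F = densityOne A ∩ Fᶜ := by rw [diff_eq]
    rw [this]
    exact aux_nullm (hA.inter hF'm.compl)
      (ae_eq_set_inter (aux_densityOne_ae hA) (aux_ae_compl hUae))
  have hrestr : volume.restrict Fᶜ
      = volume.restrict (densityOne A)ᶜ + volume.restrict (densityOne A \ F) := by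
    rw [hsplit]
    exact Measure.restrict_union₀
      ((disjoint_compl_left.mono_right diff_subset).aedisjoint) hnm
  have hptwise : ∀ w ∈ F, ∫⁻ y in Fᶜ, ρ (w - y) / edist w y
      = ∫⁻ y in (densityOne A)ᶜ, ρ (w - y) / edist w y := by
    intro w hw
    rw [hrestr, lintegral_add_measure]
    have hzero : ∫⁻ y in densityOne A \ F, ρ (w - y) / edist w y = 0 := by
      refine aux_inner_far_zero hε hρ w ?_
      rintro y ⟨hy1, hy2⟩
      exact aux_dist_ge hw hy1 hy2
    rw [hzero, add_zero]
  have houter : ∫⁻ w in F, ∫⁻ y in Fᶜ, ρ (w - y) / edist w y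
      = ∫⁻ w in F, ∫⁻ y in (densityOne A)ᶜ, ρ (w - y) / edist w y := by
    rw [Measure.restrict_congr_set hUae]
    refine lintegral_congr_ae ?_
    have hFae : ∀ᵐ w ∂(volume.restrict F'), w ∈ F := by
      rw [MeasureTheory.ae_iff, Measure.restrict_apply' hF'm]
      refine measure_mono_null (fun v hv => ?_) ((MeasureTheory.ae_eq_set.mp hUae).2)
      exact ⟨hv.2, hv.1⟩
    filter_upwards [hFae] with w hw
    exact hptwise w hw
  rw [gagPer, houter]

lemma aux_S_countable (hε : 0 < ε) (hA : MeasurableSet A) :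
    (epsComponent ε A '' densityOne A).Countable := by
  set 𝒮 := epsComponent ε A '' densityOne A with h𝒮
  have hnullm : ∀ F : 𝒮, NullMeasurableSet (F : Set (EuclideanSpace ℝ (Fin d))) volume := by
    rintro ⟨F, x, hx, rfl⟩
    obtain ⟨U, hUo, hUeq, hUae⟩ := aux_comp_repr hε hA x
    exact aux_nullm (hA.inter hUo.measurableSet) hUae
  have hdisj : Pairwise (Function.onFun (AEDisjoint volume) fun F : 𝒮 => (F : Set (EuclideanSpace ℝ (Fin d)))) := by
    rintro ⟨F, x, hx, rfl⟩ ⟨F', x', hx', rfl⟩ hne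
    have : epsComponent ε A x ≠ epsComponent ε A x' := fun h => hne (Subtype.ext h)
    exact (aux_comp_disjoint this).aedisjoint
  have hcnt := MeasureTheory.Measure.countable_meas_pos_of_disjoint_iUnion₀
    (μ := volume) hnullm hdisj
  have hall : {i : 𝒮 | 0 < volume (i : Set (EuclideanSpace ℝ (Fin d)))} = univ := by
    refine eq_univ_of_forall ?_
    rintro ⟨F, x, hx, rfl⟩
    exact aux_comp_pos hε hA hx
  rw [hall] at hcnt
  rw [← Set.countable_coe_iff]
  exact countable_coe_iff.mp (countable_univ_iff.mp hcnt) |> fun h => h.to_subtype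

lemma aux_sUnion_comp :
    (⋃ F : (epsComponent ε A '' densityOne A : Set (Set (EuclideanSpace ℝ (Fin d)))),
      (F : Set (EuclideanSpace ℝ (Fin d)))) = densityOne A := by
  ext w
  constructor
  · rintro hw
    obtain ⟨F, hF⟩ := mem_iUnion.mp hw
    obtain ⟨-, x, hx, rfl⟩ := F
    exact aux_comp_subset_dO hF
  · intro hw
    exact mem_iUnion.mpr ⟨⟨epsComponent ε A w, mem_image_of_mem _ hw⟩, aux_mem_comp_self hw⟩

lemma aux_gagPer_sum (hε : 0 < ε) (hρ : IsFiniteHorizonKernel ε ρ) (hA : MeasurableSet A) :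
    gagPer ρ A = ∑' F : (epsComponent ε A '' densityOne A : Set (Set (EuclideanSpace ℝ (Fin d)))),
      gagPer ρ (F : Set (EuclideanSpace ℝ (Fin d))) := by
  set 𝒮 := epsComponent ε A '' densityOne A with h𝒮
  haveI : Countable 𝒮 := (aux_S_countable hε hA).to_subtype
  have hnullm : ∀ F : 𝒮, NullMeasurableSet (F : Set (EuclideanSpace ℝ (Fin d))) volume := by
    rintro ⟨F, x, hx, rfl⟩
    obtain ⟨U, hUo, hUeq, hUae⟩ := aux_comp_repr hε hA x
    exact aux_nullm (hA.inter hUo.measurableSet) hUae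
  have hdisj : Pairwise (Function.onFun (AEDisjoint volume) fun F : 𝒮 => (F : Set (EuclideanSpace ℝ (Fin d)))) := by
    rintro ⟨F, x, hx, rfl⟩ ⟨F', x', hx', rfl⟩ hne
    have : epsComponent ε A x ≠ epsComponent ε A x' := fun h => hne (Subtype.ext h)
    exact (aux_comp_disjoint this).aedisjoint
  have hterm : ∀ F : 𝒮, gagPer ρ (F : Set (EuclideanSpace ℝ (Fin d)))
      = 2 * ∫⁻ w in (F : Set (EuclideanSpace ℝ (Fin d))),
          ∫⁻ y in (densityOne A)ᶜ, ρ (w - y) / edist w y := by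
    rintro ⟨F, x, hx, rfl⟩
    exact aux_gagPer_comp hε hρ hA hx
  calc gagPer ρ A
      = 2 * ∫⁻ w in A, ∫⁻ y in Aᶜ, ρ (w - y) / edist w y := rfl
    _ = 2 * ∫⁻ w in densityOne A, ∫⁻ y in (densityOne A)ᶜ, ρ (w - y) / edist w y := by
        rw [Measure.restrict_congr_set (aux_densityOne_ae hA)]
        congr 1
        refine lintegral_congr fun w => ?_
        exact congrArg (fun μ => ∫⁻ y, ρ (w - y) / edist w y ∂μ)
          (Measure.restrict_congr_set (aux_ae_compl (aux_densityOne_ae hA))).symm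
    _ = 2 * ∫⁻ w in (⋃ F : 𝒮, (F : Set (EuclideanSpace ℝ (Fin d)))),
          ∫⁻ y in (densityOne A)ᶜ, ρ (w - y) / edist w y := by
        rw [aux_sUnion_comp]
    _ = 2 * ∑' F : 𝒮, ∫⁻ w in (F : Set (EuclideanSpace ℝ (Fin d))),
          ∫⁻ y in (densityOne A)ᶜ, ρ (w - y) / edist w y := by
        rw [lintegral_iUnion₀ hnullm hdisj]
    _ = ∑' F : 𝒮, gagPer ρ (F : Set (EuclideanSpace ℝ (Fin d))) := by
        rw [← ENNReal.tsum_mul_left]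
        exact tsum_congr fun F => (hterm F).symm

end Per

section Indec

variable {ε : ℝ} {ρ : EuclideanSpace ℝ (Fin d) → ℝ≥0∞} {A : Set (EuclideanSpace ℝ (Fin d))}

lemma aux_indec (hε : 0 < ε) (hρ : IsFiniteHorizonKernel ε ρ) (hA : MeasurableSet A)
    {x : EuclideanSpace ℝ (Fin d)} (hx : x ∈ densityOne A)
    (hfin : gagPer ρ (epsComponent ε A x) ≠ ⊤) : ¬ epsDecomposable ρ (epsComponent ε A x) := by
  rintro ⟨E₁, E₂, h1m, h2m, hunion, hdisj, h1pos, h2pos, h1fin, h2fin, hsum⟩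
  set F := epsComponent ε A x with hF
  have hE₁F : E₁ ⊆ F := hunion ▸ subset_union_left
  have hE₂F : E₂ ⊆ F := hunion ▸ subset_union_right
  have key : ∀ (E E' : Set (EuclideanSpace ℝ (Fin d))), MeasurableSet E' → E ∪ E' = F →
      Disjoint E E' → ∀ w, ∫⁻ y in Eᶜ, ρ (w - y) / edist w y
        = (∫⁻ y in Fᶜ, ρ (w - y) / edist w y) + ∫⁻ y in E', ρ (w - y) / edist w y := by
    intro E E' hE'm huni hdis w
    have hsplit : Eᶜ = Fᶜ ∪ E' := by
      ext v
      simp only [mem_compl_iff, mem_union]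
      constructor
      · intro hv
        by_cases h : v ∈ E'
        · exact Or.inr h
        · refine Or.inl fun hvF => ?_
          rw [← huni] at hvF
          rcases hvF with h1 | h2
          exacts [hv h1, h h2]
      · rintro (hv | hv)
        · exact fun hc => hv (huni ▸ Or.inl hc)
        · exact fun hc => (disjoint_left.mp hdis) hc hv
    have hdisj2 : AEDisjoint volume Fᶜ E' :=
      (disjoint_compl_left.mono_right (huni ▸ subset_union_right)).aedisjoint
    rw [hsplit, Measure.restrict_union₀ hdisj2 hE'm.nullMeasurableSet, lintegral_add_measure]
  set X₁ := ∫⁻ w in E₁, ∫⁻ y in Fᶜ, ρ (w - y) / edist w y with hX₁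
  set X₂ := ∫⁻ w in E₂, ∫⁻ y in Fᶜ, ρ (w - y) / edist w y with hX₂
  set C₁ := ∫⁻ w in E₁, ∫⁻ y in E₂, ρ (w - y) / edist w y with hC₁def
  set C₂ := ∫⁻ w in E₂, ∫⁻ y in E₁, ρ (w - y) / edist w y with hC₂def
  have hgE₁ : gagPer ρ E₁ = 2 * (X₁ + C₁) := by
    rw [gagPer]
    congr 1
    rw [lintegral_congr (key E₁ E₂ h2m hunion hdisj)]
    exact lintegral_add_right _ (aux_g_meas hρ.1 (volume.restrict E₂))
  have hgE₂ : gagPer ρ E₂ = 2 * (X₂ + C₂) := by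
    rw [gagPer]
    congr 1
    rw [lintegral_congr (key E₂ E₁ h1m (by rw [union_comm]; exact hunion) hdisj.symm)]
    exact lintegral_add_right _ (aux_g_meas hρ.1 (volume.restrict E₁))
  have hgF : gagPer ρ F = 2 * (X₁ + X₂) := by
    rw [gagPer]
    rw [← hunion, Measure.restrict_union hdisj h2m, lintegral_add_measure, hunion]
  have harith : gagPer ρ E₁ + gagPer ρ E₂ = gagPer ρ F + (2 * C₁ + 2 * C₂) := by
    rw [hgE₁, hgE₂, hgF]; ring
  rw [harith] at hsum
  have h0 : (0:ℝ≥0∞) = 2 * C₁ + 2 * C₂ :=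
    (ENNReal.add_right_inj hfin).mp (by rw [add_zero]; exact hsum)
  have hC₁ : C₁ = 0 := by
    have h2C : 2 * C₁ = 0 := (add_eq_zero.mp h0.symm).1
    simpa using h2C
  -- now derive a contradiction : the cross term is positive
  obtain ⟨x₁, hx₁mem, hx₁d⟩ := aux_exists_density h1m
    (by rw [univ_inter]; exact h1pos : 0 < volume ((univ : Set (EuclideanSpace ℝ (Fin d))) ∩ E₁))
  obtain ⟨x₂, hx₂mem, hx₂d⟩ := aux_exists_density h2m
    (by rw [univ_inter]; exact h2pos : 0 < volume ((univ : Set (EuclideanSpace ℝ (Fin d))) ∩ E₂))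
  have hx₁F : x₁ ∈ F := hE₁F hx₁mem.2
  have hx₂F : x₂ ∈ F := hE₂F hx₂mem.2
  have hconn : epsConnected ε A x₁ x₂ := aux_conn_trans (aux_conn_symm hx₁F.2) hx₂F.2
  obtain ⟨N, z, hz0, hzN, hzmem, hzd⟩ := hconn
  have hziF : ∀ i ≤ N, z i ∈ F := by
    intro i hi
    have hconn_i : epsConnected ε A x₁ (z i) :=
      ⟨i, z, hz0, rfl, fun j hj => hzmem j (hj.trans hi), fun j hj => hzd j (lt_of_lt_of_le hj hi)⟩
    have hmem : z i ∈ epsComponent ε A x₁ := ⟨hzmem i hi, hconn_i⟩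
    rwa [aux_comp_eq hx₁F] at hmem
  have hzF : ∀ i ≤ N, ∀ r : ℝ, 0 < r → 0 < volume (F ∩ ball (z i) r) := by
    intro i hi r hr
    have hr'pos : 0 < min r ε := lt_min hr hε
    have hsub : densityOne A ∩ ball (z i) (min r ε) ⊆ F ∩ ball (z i) r := by
      rintro w ⟨hw1, hw2⟩
      refine ⟨aux_comp_extend (hziF i hi) hw1 ?_, ball_subset_ball (min_le_left r ε) hw2⟩
      rw [dist_comm]
      exact (mem_ball.mp hw2).trans_le (min_le_right r ε)
    have hpos : 0 < volume (densityOne A ∩ ball (z i) (min r ε)) := by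
      rw [measure_congr (ae_eq_set_inter (aux_densityOne_ae hA)
        (EventuallyEq.rfl : ball (z i) (min r ε) =ᵐ[volume] ball (z i) (min r ε)))]
      exact aux_pos_ball (hzmem i hi) hr'pos
    exact hpos.trans_le (measure_mono hsub)
  have hdich : ∀ i ≤ N, (∀ r : ℝ, 0 < r → 0 < volume (E₁ ∩ ball (z i) r))
      ∨ (∀ r : ℝ, 0 < r → 0 < volume (E₂ ∩ ball (z i) r)) := by
    intro i hi
    by_cases hQ : ∀ r : ℝ, 0 < r → 0 < volume (E₁ ∩ ball (z i) r)
    · exact Or.inl hQ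
    · right
      push_neg at hQ
      obtain ⟨r₁, hr₁, hr₁0⟩ := hQ
      have hE₁null : volume (E₁ ∩ ball (z i) r₁) = 0 := le_antisymm hr₁0 zero_le
      intro r hr
      have hr' : 0 < min r r₁ := lt_min hr hr₁
      have hFpos := hzF i hi (min r r₁) hr'
      have hsubu : F ∩ ball (z i) (min r r₁) ⊆
          (E₁ ∩ ball (z i) r₁) ∪ (E₂ ∩ ball (z i) (min r r₁)) := by
        rintro w ⟨hwF, hwb⟩
        rw [← hunion] at hwF
        rcases hwF with h | h
        · exact Or.inl ⟨h, ball_subset_ball (min_le_right r r₁) hwb⟩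
        · exact Or.inr ⟨h, hwb⟩
      refine lt_of_lt_of_le ?_
        (measure_mono (inter_subset_inter_right _ (ball_subset_ball (min_le_left r r₁))))
      by_contra hc
      have h2null : volume (E₂ ∩ ball (z i) (min r r₁)) = 0 := by
        simpa using not_lt.mp hc
      exact hFpos.ne'
        (measure_mono_null hsubu (measure_union_null hE₁null h2null))
  have hP0 : ∀ r : ℝ, 0 < r → 0 < volume (E₁ ∩ ball (z 0) r) := by
    rw [hz0]; exact fun r hr => aux_supp_of_density hx₁d hr
  have hRN : ∀ r : ℝ, 0 < r → 0 < volume (E₂ ∩ ball (z N) r) := by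
    rw [hzN]; exact fun r hr => aux_supp_of_density hx₂d hr
  have hCpos : 0 < C₁ := by
    rw [hC₁def]
    by_cases hall : ∀ i ≤ N, ∀ r : ℝ, 0 < r → 0 < volume (E₁ ∩ ball (z i) r)
    · exact aux_cross_pos hε hρ h1m h2m (hall N le_rfl) hRN (by rw [dist_self]; exact hε)
    · push_neg at hall
      have hex : ∃ i, i ≤ N ∧ ¬ ∀ r : ℝ, 0 < r → 0 < volume (E₁ ∩ ball (z i) r) := by
        obtain ⟨i, hi, r, hr, hle⟩ := hall
        exact ⟨i, hi, fun hcon => absurd (hcon r hr) (not_lt.mpr hle)⟩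
      classical
      have hspec := Nat.find_spec hex
      have hleN : Nat.find hex ≤ N := hspec.1
      have hi₀0 : Nat.find hex ≠ 0 := by
        intro h
        apply hspec.2
        rw [h]
        exact hP0
      have hPj : ∀ r : ℝ, 0 < r → 0 < volume (E₁ ∩ ball (z (Nat.find hex - 1)) r) := by
        by_contra hc
        exact Nat.find_min hex (show Nat.find hex - 1 < Nat.find hex by omega) ⟨by omega, hc⟩
      have hRi₀ : ∀ r : ℝ, 0 < r → 0 < volume (E₂ ∩ ball (z (Nat.find hex)) r) :=
        (hdich (Nat.find hex) hspec.1).resolve_left hspec.2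
      have hdlt : dist (z (Nat.find hex - 1)) (z (Nat.find hex)) < ε := by
        have h := hzd (Nat.find hex - 1) (by omega)
        rwa [show Nat.find hex - 1 + 1 = Nat.find hex from by omega] at h
      exact aux_cross_pos hε hρ h1m h2m hPj hRi₀ hdlt
  exact hCpos.ne' hC₁

end Indec

/-- ε-decomposition theorem: a set of finite `𝔓_ε`-perimeter has a unique at most countable
decomposition into its `ε`-connected components, which are `ε`-indecomposable, have positive
measure, are pairwise disjoint, cover `E^(1)`, and whose perimeters sum to `𝔓_ε(E)`. -/
theorem statement4 (d : ℕ) (ε : ℝ) (hε : 0 < ε)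
    (ρ : EuclideanSpace ℝ (Fin d) → ℝ≥0∞) (hρ : IsFiniteHorizonKernel ε ρ)
    (A : Set (EuclideanSpace ℝ (Fin d))) (hA : MeasurableSet A)
    (hfin : gagPer ρ A < ⊤) :
    ∃! S : Set (Set (EuclideanSpace ℝ (Fin d))),
      S.Countable ∧
      (∀ F ∈ S, ∃ x ∈ densityOne A, F = epsComponent ε A x) ∧
      (∀ F ∈ S, ¬ epsDecomposable ρ F ∧ 0 < volume F) ∧
      S.PairwiseDisjoint id ∧
      ⋃₀ S = densityOne A ∧
      gagPer ρ A = ∑' F : S, gagPer ρ (F : Set (EuclideanSpace ℝ (Fin d))) := by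
  set 𝒮 := epsComponent ε A '' densityOne A with h𝒮
  have hsum := aux_gagPer_sum hε hρ hA
  have hfinF : ∀ F ∈ 𝒮, gagPer ρ F ≠ ⊤ := by
    intro F hF
    have hle : gagPer ρ F ≤ ∑' F : 𝒮, gagPer ρ (F : Set (EuclideanSpace ℝ (Fin d))) :=
      ENNReal.le_tsum (⟨F, hF⟩ : 𝒮)
    rw [← hsum] at hle
    exact (hle.trans_lt hfin).ne
  refine ⟨𝒮, ⟨aux_S_countable hε hA, ?_, ?_, ?_, ?_, hsum⟩, ?_⟩
  · rintro F ⟨x, hx, rfl⟩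
    exact ⟨x, hx, rfl⟩
  · rintro F hF
    obtain ⟨x, hx, rfl⟩ := hF
    exact ⟨aux_indec hε hρ hA hx (hfinF _ (mem_image_of_mem _ hx)),
      aux_comp_pos hε hA hx⟩
  · rintro F hF F' hF' hne
    obtain ⟨x, hx, rfl⟩ := hF
    obtain ⟨x', hx', rfl⟩ := hF'
    exact aux_comp_disjoint hne
  · rw [sUnion_eq_iUnion]
    exact aux_sUnion_comp
  · rintro S' ⟨hc', hrepr', hprop', hdisj', hcover', hsum'⟩
    ext F
    constructor
    · intro hF
      obtain ⟨x, hx, rfl⟩ := hrepr' F hF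
      exact mem_image_of_mem _ hx
    · rintro ⟨x, hx, rfl⟩
      have hxS : x ∈ ⋃₀ S' := hcover'.symm ▸ hx
      obtain ⟨F', hF', hxF'⟩ := hxS
      obtain ⟨x', hx', rfl⟩ := hrepr' F' hF'
      rw [show epsComponent ε A x = epsComponent ε A x' from aux_comp_eq hxF']
      exact hF'

end
end

section
/- Let ε > 0 and ρ_ε a radial finite-horizon kernel with ∫_{ℝ^d} ρ_ε(h) dh = 1. Then lim_{δ→0⁺} 𝔓_ε(B_δ(0)) = 0, where B_δ(0) is the ball of radius δ centered at the origin. -/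
open MeasureTheory Metric Set Filter
open scoped ENNReal Topology

noncomputable section

private lemma pow_sub_pow_le_lin (n : ℕ) {a b : ℝ} (hb : 0 ≤ b) (hba : b ≤ a) (ha : a ≤ 1) :
    a ^ n - b ^ n ≤ n * (a - b) := by
  induction n with
  | zero => simp
  | succ n ih =>
    have h1 : b ^ n ≤ 1 := pow_le_one₀ hb (hba.trans ha)
    have h2 : 0 ≤ a := hb.trans hba
    have hab : 0 ≤ a - b := sub_nonneg.2 hba
    have e0 : a ^ (n+1) - b ^ (n+1) = a * (a ^ n - b ^ n) + (a - b) * b ^ n := by ring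
    have e1 : a * (a ^ n - b ^ n) ≤ a * ((n : ℝ) * (a - b)) := mul_le_mul_of_nonneg_left ih h2
    have e2 : a * ((n : ℝ) * (a - b)) ≤ 1 * ((n : ℝ) * (a - b)) :=
      mul_le_mul_of_nonneg_right ha (mul_nonneg (Nat.cast_nonneg n) hab)
    have e3 : (a - b) * b ^ n ≤ (a - b) * 1 := mul_le_mul_of_nonneg_left h1 hab
    push_cast
    linarith

/-- The `𝔓_ε`-perimeter of balls vanishes as the radius goes to zero. -/
theorem statement12 (d : ℕ) (ε : ℝ) (hε : 0 < ε)
    (ρ : EuclideanSpace ℝ (Fin d) → ℝ≥0∞) (hρ : IsFiniteHorizonKernel ε ρ)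
    (hrad : ∀ x y : EuclideanSpace ℝ (Fin d), ‖x‖ = ‖y‖ → ρ x = ρ y)
    (hnorm : (∫⁻ h, ρ h) = 1) :
    Tendsto (fun δ : ℝ => gagPer ρ (ball (0 : EuclideanSpace ℝ (Fin d)) δ))
      (𝓝[>] 0) (𝓝 0) := by
  obtain ⟨hmeas, -⟩ := hρ
  by_cases hd : d = 0
  · subst hd
    refine Tendsto.congr' ?_ (tendsto_const_nhds (x := (0:ℝ≥0∞)))
    filter_upwards [self_mem_nhdsWithin] with δ (hδ : (0:ℝ) < δ)
    have hb : (ball (0 : EuclideanSpace ℝ (Fin 0)) δ)ᶜ = ∅ := by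
      ext x
      simp [mem_ball, Subsingleton.elim x (0 : EuclideanSpace ℝ (Fin 0)), hδ]
    simp [gagPer, hb]
  -- main case : d ≥ 1
  haveI : Nonempty (Fin d) := Fin.pos_iff_nonempty.mp (Nat.pos_of_ne_zero hd)
  have hd1 : (1 : ℕ) ≤ d := Nat.one_le_iff_ne_zero.mpr hd
  set v : ℝ≥0∞ := volume (ball (0 : EuclideanSpace ℝ (Fin d)) 1) with hv
  have hvne : v ≠ ∞ := measure_ball_lt_top.ne
  set G : ℝ → EuclideanSpace ℝ (Fin d) → ℝ≥0∞ := fun δ h =>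
    (ENNReal.ofReal (δ ^ d) - ENNReal.ofReal (max (δ - ‖h‖) 0 ^ d)) * v *
      (ρ h / (‖h‖₊ : ℝ≥0∞)) with hG
  have hf_meas : Measurable fun h : EuclideanSpace ℝ (Fin d) => ρ h / (‖h‖₊ : ℝ≥0∞) :=
    hmeas.div measurable_nnnorm.coe_nnreal_ennreal
  have hball : ∀ r : ℝ, 0 ≤ r →
      volume (ball (0 : EuclideanSpace ℝ (Fin d)) r) = ENNReal.ofReal (r ^ d) * v := by
    intro r hr
    rw [Measure.addHaar_ball (μ := volume) 0 hr, finrank_euclideanSpace_fin]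
  -- Step 1: the key inequality
  have key : ∀ δ : ℝ, 0 < δ →
      gagPer ρ (ball (0 : EuclideanSpace ℝ (Fin d)) δ) ≤ 2 * ∫⁻ h, G δ h := by
    intro δ hδ
    set B := ball (0 : EuclideanSpace ℝ (Fin d)) δ with hB
    have hBm : MeasurableSet B := measurableSet_ball
    have inner_eq : ∀ x : EuclideanSpace ℝ (Fin d),
        (∫⁻ y in Bᶜ, ρ (x - y) / edist x y)
          = ∫⁻ h, (Bᶜ).indicator (fun _ => (1:ℝ≥0∞)) (x - h) * (ρ h / (‖h‖₊ : ℝ≥0∞)) := by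
      intro x
      have hmp : MeasurePreserving (fun h : EuclideanSpace ℝ (Fin d) => x - h) volume volume := by
        have h1 : (fun h : EuclideanSpace ℝ (Fin d) => x - h)
            = (fun h => x + h) ∘ (fun h => -h) := by
          funext h; simp [sub_eq_add_neg]
        rw [h1]
        exact (measurePreserving_add_left volume x).comp (Measure.measurePreserving_neg volume)
      have hemb : MeasurableEmbedding (fun h : EuclideanSpace ℝ (Fin d) => x - h) :=
        (MeasurableEquiv.subLeft x).measurableEmbedding
      rw [← hmp.setLIntegral_comp_preimage_emb hemb (fun y => ρ (x - y) / edist x y) Bᶜ]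
      have hpre : MeasurableSet ((fun h : EuclideanSpace ℝ (Fin d) => x - h) ⁻¹' Bᶜ) :=
        hBm.compl.preimage (measurable_const.sub measurable_id)
      rw [← lintegral_indicator hpre]
      refine lintegral_congr fun h => ?_
      by_cases hxh : x - h ∈ Bᶜ
      · rw [Set.indicator_of_mem (show h ∈ (fun h : EuclideanSpace ℝ (Fin d) => x - h) ⁻¹' Bᶜ
            from hxh), Set.indicator_of_mem hxh, one_mul]
        rw [edist_nndist, nndist_eq_nnnorm, sub_sub_cancel]
      · rw [Set.indicator_of_notMem (show h ∉ (fun h : EuclideanSpace ℝ (Fin d) => x - h) ⁻¹' Bᶜ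
            from hxh), Set.indicator_of_notMem hxh, zero_mul]
    have outer_eq : (∫⁻ x in B, ∫⁻ y in Bᶜ, ρ (x - y) / edist x y)
        = ∫⁻ x, ∫⁻ h, B.indicator (fun _ => (1:ℝ≥0∞)) x *
            ((Bᶜ).indicator (fun _ => (1:ℝ≥0∞)) (x - h) * (ρ h / (‖h‖₊:ℝ≥0∞))) := by
      rw [← lintegral_indicator hBm]
      refine lintegral_congr fun x => ?_
      by_cases hx : x ∈ B
      · simp only [Set.indicator_of_mem hx, one_mul, inner_eq x]
      · simp [Set.indicator_of_notMem hx]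
    have hprod : AEMeasurable (Function.uncurry fun x h : EuclideanSpace ℝ (Fin d) =>
        B.indicator (fun _ => (1:ℝ≥0∞)) x *
          ((Bᶜ).indicator (fun _ => (1:ℝ≥0∞)) (x - h) * (ρ h / (‖h‖₊:ℝ≥0∞))))
        ((volume : Measure (EuclideanSpace ℝ (Fin d))).prod volume) := by
      refine Measurable.aemeasurable ?_
      exact ((measurable_one.indicator hBm).comp measurable_fst).mul
        (((measurable_one.indicator hBm.compl).comp (measurable_fst.sub measurable_snd)).mul
          (hf_meas.comp measurable_snd))
    have swap := lintegral_lintegral_swap hprod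
    have inner2 : ∀ h : EuclideanSpace ℝ (Fin d),
        (∫⁻ x, B.indicator (fun _ => (1:ℝ≥0∞)) x *
          ((Bᶜ).indicator (fun _ => (1:ℝ≥0∞)) (x - h) * (ρ h / (‖h‖₊:ℝ≥0∞))))
        = volume (B ∩ {x | x - h ∈ Bᶜ}) * (ρ h / (‖h‖₊:ℝ≥0∞)) := by
      intro h
      have hSm : MeasurableSet (B ∩ {x : EuclideanSpace ℝ (Fin d) | x - h ∈ Bᶜ}) :=
        hBm.inter (hBm.compl.preimage (measurable_id.sub measurable_const))
      have hpt : ∀ x : EuclideanSpace ℝ (Fin d),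
          B.indicator (fun _ => (1:ℝ≥0∞)) x *
            ((Bᶜ).indicator (fun _ => (1:ℝ≥0∞)) (x - h) * (ρ h / (‖h‖₊:ℝ≥0∞)))
          = (B ∩ {x | x - h ∈ Bᶜ}).indicator (1 : EuclideanSpace ℝ (Fin d) → ℝ≥0∞) x
              * (ρ h / (‖h‖₊:ℝ≥0∞)) := by
        intro x
        by_cases hx : x ∈ B
        · by_cases hxh : x - h ∈ Bᶜ
          · rw [Set.indicator_of_mem hx, Set.indicator_of_mem hxh,
              Set.indicator_of_mem (show x ∈ B ∩ {x | x - h ∈ Bᶜ} from ⟨hx, hxh⟩)]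
            simp
          · rw [Set.indicator_of_notMem hxh,
              Set.indicator_of_notMem (show x ∉ B ∩ {x | x - h ∈ Bᶜ} from fun hc => hxh hc.2)]
            simp
        · rw [Set.indicator_of_notMem hx,
            Set.indicator_of_notMem (show x ∉ B ∩ {x | x - h ∈ Bᶜ} from fun hc => hx hc.1)]
          simp
      simp_rw [hpt]
      rw [lintegral_mul_const _ (measurable_one.indicator hSm), lintegral_indicator_one hSm]
    have vol_le : ∀ h : EuclideanSpace ℝ (Fin d), volume (B ∩ {x | x - h ∈ Bᶜ})
        ≤ (ENNReal.ofReal (δ ^ d) - ENNReal.ofReal (max (δ - ‖h‖) 0 ^ d)) * v := by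
      intro h
      have hsub : B ∩ {x | x - h ∈ Bᶜ}
          ⊆ B \ ball (0 : EuclideanSpace ℝ (Fin d)) (max (δ - ‖h‖) 0) := by
        rintro x ⟨hx1, hx2⟩
        refine ⟨hx1, fun hx3 => ?_⟩
        rw [mem_ball_zero_iff] at hx3
        have hxh : ¬ ‖x - h‖ < δ := by
          simpa [hB, mem_ball_zero_iff] using hx2
        have h1 : ‖x - h‖ ≤ ‖x‖ + ‖h‖ := norm_sub_le x h
        rcases le_or_gt (δ - ‖h‖) 0 with hc | hc
        · rw [max_eq_right hc] at hx3; exact absurd hx3 (norm_nonneg x).not_gt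
        · rw [max_eq_left hc.le] at hx3; exact hxh (by linarith)
      calc volume (B ∩ {x | x - h ∈ Bᶜ})
          ≤ volume (B \ ball (0 : EuclideanSpace ℝ (Fin d)) (max (δ - ‖h‖) 0)) :=
            measure_mono hsub
        _ = volume B - volume (ball (0 : EuclideanSpace ℝ (Fin d)) (max (δ - ‖h‖) 0)) := by
            refine measure_diff ?_ measurableSet_ball.nullMeasurableSet measure_ball_lt_top.ne
            exact ball_subset_ball (max_le (by linarith [norm_nonneg h]) hδ.le)
        _ = ENNReal.ofReal (δ ^ d) * v - ENNReal.ofReal (max (δ - ‖h‖) 0 ^ d) * v := by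
            rw [hB, hball δ hδ.le, hball _ (le_max_right _ _)]
        _ = (ENNReal.ofReal (δ ^ d) - ENNReal.ofReal (max (δ - ‖h‖) 0 ^ d)) * v :=
            (ENNReal.sub_mul fun _ _ => hvne).symm
    calc gagPer ρ B = 2 * ∫⁻ x in B, ∫⁻ y in Bᶜ, ρ (x - y) / edist x y := rfl
      _ = 2 * ∫⁻ h, volume (B ∩ {x | x - h ∈ Bᶜ}) * (ρ h / (‖h‖₊:ℝ≥0∞)) := by
          rw [outer_eq, swap]
          congr 1
          exact lintegral_congr inner2
      _ ≤ 2 * ∫⁻ h, G δ h := by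
          refine mul_le_mul_right (lintegral_mono fun h => ?_) 2
          exact mul_le_mul_left (vol_le h) _
  -- a.e. facts
  haveI : NullSingletonClass (volume : Measure (EuclideanSpace ℝ (Fin d))) := inferInstance
  have h0ae : ∀ᵐ h : EuclideanSpace ℝ (Fin d) ∂volume, h ≠ 0 := by
    have hset : {h : EuclideanSpace ℝ (Fin d) | ¬ h ≠ 0} = {0} := by ext h; simp
    rw [ae_iff, hset]
    exact measure_singleton 0
  have hfinae : ∀ᵐ h : EuclideanSpace ℝ (Fin d) ∂volume, ρ h < ∞ :=
    ae_lt_top hmeas (by rw [hnorm]; exact ENNReal.one_ne_top)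
  -- measurability of G δ
  have hGmeas : ∀ δ : ℝ, Measurable (G δ) := by
    intro δ
    refine Measurable.mul (Measurable.mul ?_ measurable_const) hf_meas
    have hcont : Continuous fun h : EuclideanSpace ℝ (Fin d) =>
        ENNReal.ofReal (δ ^ d) - ENNReal.ofReal (max (δ - ‖h‖) 0 ^ d) :=
      (ENNReal.continuous_sub_left ENNReal.ofReal_ne_top).comp
        (ENNReal.continuous_ofReal.comp
          (((continuous_const.sub continuous_norm).max continuous_const).pow d))
    exact hcont.measurable
  -- the dominating function
  have hbound_int : (∫⁻ h : EuclideanSpace ℝ (Fin d), (d : ℝ≥0∞) * v * ρ h) ≠ ∞ := by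
    rw [lintegral_const_mul' _ _ (ENNReal.mul_ne_top (ENNReal.natCast_ne_top d) hvne), hnorm,
      mul_one]
    exact ENNReal.mul_ne_top (ENNReal.natCast_ne_top d) hvne
  have h_bound : ∀ᶠ δ in 𝓝[>] (0:ℝ),
      ∀ᵐ h : EuclideanSpace ℝ (Fin d) ∂volume, G δ h ≤ (d : ℝ≥0∞) * v * ρ h := by
    filter_upwards [Ioc_mem_nhdsGT_of_mem (Set.left_mem_Ico.2 zero_lt_one)] with δ hδ
    filter_upwards [h0ae] with h hh
    have hn0 : (‖h‖₊ : ℝ≥0∞) ≠ 0 := by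
      simpa using (nnnorm_ne_zero_iff.2 hh)
    have hr : δ ^ d - max (δ - ‖h‖) 0 ^ d ≤ (d : ℝ) * ‖h‖ := by
      rcases le_or_gt ‖h‖ δ with hc | hc
      · have hkey := pow_sub_pow_le_lin d (a := δ) (b := δ - ‖h‖)
          (by linarith) (by linarith [norm_nonneg h]) hδ.2
        rw [max_eq_left (by linarith)]
        have : δ - (δ - ‖h‖) = ‖h‖ := by ring
        rw [this] at hkey
        exact hkey
      · have h1 : max (δ - ‖h‖) 0 = 0 := max_eq_right (by linarith)
        rw [h1, zero_pow hd]
        have h2 : δ ^ d ≤ δ := pow_le_of_le_one hδ.1.le hδ.2 hd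
        have h3 : (1:ℝ) ≤ (d:ℝ) := by exact_mod_cast hd1
        nlinarith [norm_nonneg h]
    have key1 : ENNReal.ofReal (δ ^ d) - ENNReal.ofReal (max (δ - ‖h‖) 0 ^ d)
        ≤ (d : ℝ≥0∞) * (‖h‖₊ : ℝ≥0∞) := by
      rw [← ENNReal.ofReal_sub _ (by positivity)]
      calc ENNReal.ofReal (δ ^ d - max (δ - ‖h‖) 0 ^ d)
          ≤ ENNReal.ofReal ((d:ℝ) * ‖h‖) := ENNReal.ofReal_le_ofReal hr
        _ = (d : ℝ≥0∞) * (‖h‖₊ : ℝ≥0∞) := by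
            rw [ENNReal.ofReal_mul (by positivity), ENNReal.ofReal_natCast,
              ← coe_nnnorm, ENNReal.ofReal_coe_nnreal]
    calc G δ h ≤ (d : ℝ≥0∞) * (‖h‖₊:ℝ≥0∞) * v * (ρ h / (‖h‖₊:ℝ≥0∞)) :=
          mul_le_mul_left (mul_le_mul_left key1 v) _
      _ = (d : ℝ≥0∞) * v * (ρ h / (‖h‖₊:ℝ≥0∞) * (‖h‖₊:ℝ≥0∞)) := by ring
      _ = (d : ℝ≥0∞) * v * ρ h := by
          rw [ENNReal.div_mul_cancel hn0 ENNReal.coe_ne_top]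
  have h_lim : ∀ᵐ h : EuclideanSpace ℝ (Fin d) ∂volume,
      Tendsto (fun δ => G δ h) (𝓝[>] (0:ℝ)) (𝓝 0) := by
    filter_upwards [h0ae, hfinae] with h hh hfin
    have hn0 : (‖h‖₊ : ℝ≥0∞) ≠ 0 := by simpa using (nnnorm_ne_zero_iff.2 hh)
    have hc : v * (ρ h / (‖h‖₊:ℝ≥0∞)) ≠ ∞ :=
      ENNReal.mul_ne_top hvne (ENNReal.div_lt_top hfin.ne hn0).ne
    have t1 : Tendsto (fun δ : ℝ => ENNReal.ofReal (δ ^ d)) (𝓝[>] 0) (𝓝 0) := by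
      have tpow : Tendsto (fun δ : ℝ => δ ^ d) (𝓝[>] 0) (𝓝 0) := by
        simpa [zero_pow hd] using
          ((continuous_pow d).tendsto (0:ℝ)).mono_left nhdsWithin_le_nhds
      simpa [Function.comp_def] using (ENNReal.continuous_ofReal.tendsto 0).comp tpow
    have t2 : Tendsto (fun δ : ℝ => ENNReal.ofReal (δ ^ d) * (v * (ρ h / (‖h‖₊:ℝ≥0∞))))
        (𝓝[>] (0:ℝ)) (𝓝 0) := by
      simpa using ENNReal.Tendsto.mul_const t1 (Or.inr hc)
    refine tendsto_of_tendsto_of_tendsto_of_le_of_le' tendsto_const_nhds t2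
      (Eventually.of_forall fun δ => zero_le) (Eventually.of_forall fun δ => ?_)
    calc G δ h ≤ ENNReal.ofReal (δ ^ d) * v * (ρ h / (‖h‖₊:ℝ≥0∞)) :=
          mul_le_mul_left (mul_le_mul_left tsub_le_self v) _
      _ = ENNReal.ofReal (δ ^ d) * (v * (ρ h / (‖h‖₊:ℝ≥0∞))) := by ring
  have hDCT : Tendsto (fun δ => ∫⁻ h, G δ h) (𝓝[>] (0:ℝ)) (𝓝 0) := by
    have := tendsto_lintegral_filter_of_dominated_convergence
      (μ := (volume : Measure (EuclideanSpace ℝ (Fin d))))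
      (bound := fun h => (d : ℝ≥0∞) * v * ρ h) (F := G) (f := fun _ => 0)
      (Eventually.of_forall hGmeas) h_bound hbound_int h_lim
    simpa using this
  have h2 : Tendsto (fun δ => 2 * ∫⁻ h, G δ h) (𝓝[>] (0:ℝ)) (𝓝 0) := by
    simpa using ENNReal.Tendsto.const_mul hDCT (Or.inr (by norm_num : (2:ℝ≥0∞) ≠ ∞))
  refine tendsto_of_tendsto_of_tendsto_of_le_of_le' tendsto_const_nhds h2
    (Eventually.of_forall fun δ => zero_le) ?_
  filter_upwards [self_mem_nhdsWithin] with δ hδ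
  exact key δ hδ

end
end
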